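/- arXiv:2504.01283 — 4 statements merged into one kernel-verified Lean document; each statement's English description precedes it below -/
import Mathlib

section
/- Let G be a countable group acting on S¹ by orientation-preserving homeomorphisms, with the action minimal and proximal. Then for any pair of nonempty closed intervals I, J ⊊ S¹ with nonempty interior there exists g ∈ G such that g(I) ⊆ J. If the action is furthermore topologically nonfree, then for every nontrivial interval J ⊆ S¹ there exists a ∈ G∖{e_G} with supp(a) ⊆ J. -/
open MeasureTheory Filter Topology Set

noncomputable section

/-! ## The circle `ℝ/ℤ` and group actions on it -/

/-- The circle `S¹ ≅ ℝ/ℤ`. -/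
abbrev S1 : Type := AddCircle (1 : ℝ)

instance fact_zero_lt_one' : Fact ((0 : ℝ) < 1) := ⟨one_pos⟩

/-- The canonical projection `ℝ → ℝ/ℤ`. -/
def toS1 (t : ℝ) : S1 := (t : S1)

/-- `g` acts as an orientation-preserving circle map: it admits a monotone degree-one lift. -/
def OrientPres {G : Type*} [Monoid G] [MulAction G S1] (g : G) : Prop :=
  ∃ F : ℝ → ℝ, Monotone F ∧ (∀ t, F (t + 1) = F t + 1) ∧ ∀ t : ℝ, g • toS1 t = toS1 (F t)

/-- The action of `G` on the circle is by homeomorphisms (continuity of each element suffices,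
since a group action consists of bijections with continuous inverses given by the action of
inverses). -/
def ActsByHomeos (G : Type*) [Monoid G] [MulAction G S1] : Prop :=
  ∀ g : G, Continuous fun x : S1 => g • x

/-- The action of `G` on the circle is faithful, i.e. `G` is (identified with) a subgroup of
the homeomorphism group of the circle. -/
def FaithfulAct (G : Type*) [Monoid G] [MulAction G S1] : Prop :=
  ∀ g : G, (∀ x : S1, g • x = x) → g = 1

/-- Minimality: every orbit is dense. -/
def MinimalAct (G : Type*) [Monoid G] [MulAction G S1] : Prop :=
  ∀ x : S1, Dense (MulAction.orbit G x)

/-- A closed interval (arc) of the circle: the image of a closed interval of length at most one. -/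
def IsClosedArc (I : Set S1) : Prop :=
  ∃ a b : ℝ, a ≤ b ∧ b ≤ a + 1 ∧ I = toS1 '' Set.Icc a b

/-- An interval (arc) of the circle: the image of an order-connected subset of `ℝ`. -/
def IsArc (I : Set S1) : Prop :=
  ∃ S : Set ℝ, S.OrdConnected ∧ I = toS1 '' S

/-- Proximality: every proper closed interval can be contracted to arbitrarily small diameter. -/
def ProximalAct (G : Type*) [Monoid G] [MulAction G S1] : Prop :=
  ∀ I : Set S1, IsClosedArc I → I ≠ Set.univ → ∀ ε : ℝ, 0 < ε →
    ∃ g : G, Metric.diam ((fun x : S1 => g • x) '' I) < ε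

/-- The support of a circle homeomorphism: the closure of the set of non-fixed points. -/
def homSupp {G : Type*} [Monoid G] [MulAction G S1] (g : G) : Set S1 :=
  closure {x : S1 | g • x ≠ x}

/-- Topological nonfreeness: some nontrivial element has a fixed-point set with nonempty
interior. -/
def TopNonfree (G : Type*) [Group G] [MulAction G S1] : Prop :=
  ∃ g : G, g ≠ 1 ∧ (interior {x : S1 | g • x = x}).Nonempty

/-! ## Probability measures on countable groups, entropy and random walks -/

/-- Nondegeneracy: the semigroup generated by the support of `μ` is all of `G`. -/
def Nondeg {G : Type*} [Group G] (μ : PMF G) : Prop :=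
  Subsemigroup.closure μ.support = ⊤

/-- The summand `-μ(g) log μ(g)` in the Shannon entropy. -/
def entTerm {G : Type*} (μ : PMF G) (g : G) : ℝ :=
  -((μ g).toReal * Real.log (μ g).toReal)

/-- Finiteness of the Shannon entropy `H(μ) = -∑ μ(g) log μ(g)`. -/
def FiniteShannonEntropy {G : Type*} (μ : PMF G) : Prop :=
  Summable (entTerm μ)

/-- The Shannon entropy `H(μ) = -∑ μ(g) log μ(g)`. -/
def pmfEntropy {G : Type*} (μ : PMF G) : ℝ :=
  ∑' g, entTerm μ g

/-- Convolution of two probability measures on a group. -/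
def pmfConv {G : Type*} [Mul G] (μ ν : PMF G) : PMF G :=
  μ.bind fun g => ν.map fun h => g * h

/-- Convolution powers `μ^{*n}` (with `μ^{*0} = δ_e`). -/
def pmfPow {G : Type*} [Monoid G] (μ : PMF G) : ℕ → PMF G
  | 0 => PMF.pure 1
  | n + 1 => pmfConv (pmfPow μ n) μ

/-- The lazy version `(1/2) μ + (1/2) δ_e` of `μ`. -/
def lazyPMF {G : Type*} [One G] (μ : PMF G) : PMF G :=
  (PMF.bernoulli 2⁻¹ (by norm_num)).bind fun b => if b then μ else PMF.pure 1

/-- `P` is the law on the space of trajectories `G^ℕ` of the right `μ`-random walk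
`w₀ = e`, `wₙ₊₁ = wₙ gₙ₊₁` with i.i.d. increments of law `μ`: it is the probability measure
whose cylinder probabilities are given by products of increments. -/
def IsRWMeasure {G : Type*} [Group G] [MeasurableSpace G] (μ : PMF G)
    (P : Measure (ℕ → G)) : Prop :=
  IsProbabilityMeasure P ∧
    ∀ (n : ℕ) (y : ℕ → G), y 0 = 1 →
      P {w | ∀ k ≤ n, w k = y k} = ∏ k ∈ Finset.range n, μ ((y k)⁻¹ * y (k + 1))

/-- `ν` is a `μ`-stationary measure on the circle: `ν = μ * ν`. -/
def IsStationaryS1 {G : Type*} [Monoid G] [MulAction G S1] (μ : PMF G) (ν : Measure S1) : Prop :=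
  ∀ s : Set S1, MeasurableSet s → ν s = ∑' g : G, μ g * ν ((fun x : S1 => g • x) ⁻¹' s)

/-- `ν` is the unique `μ`-stationary probability measure on the circle. -/
def IsUniqueStationaryS1 {G : Type*} [Monoid G] [MulAction G S1] (μ : PMF G)
    (ν : Measure S1) : Prop :=
  IsProbabilityMeasure ν ∧ IsStationaryS1 μ ν ∧
    ∀ ν' : Measure S1, IsProbabilityMeasure ν' → IsStationaryS1 μ ν' → ν' = ν

/-! ## μ-boundaries and the Poisson boundary -/

/-- `(X, ν)`, together with the boundary map `bnd`, is a `μ`-boundary of `G`: a probability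
space with a measurable `G`-action and a shift-invariant measurable map from the space of
trajectories of the `μ`-random walk pushing the trajectory law forward to `ν`. -/
structure IsMuBoundary {G X : Type*} [Group G] [MeasurableSpace G] [MeasurableSpace X]
    (μ : PMF G) (P : Measure (ℕ → G)) (act : G → X → X) (ν : Measure X)
    (bnd : (ℕ → G) → X) : Prop where
  isRW : IsRWMeasure μ P
  probν : IsProbabilityMeasure ν
  act_one : ∀ x, act 1 x = x
  act_mul : ∀ g h x, act (g * h) x = act g (act h x)
  measAct : ∀ g, Measurable (act g)
  measBnd : Measurable bnd
  shiftInv : ∀ᵐ w ∂P, bnd (fun n => w (n + 1)) = bnd w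
  push : Measure.map bnd P = ν

/-- `(X, ν)` is the Poisson boundary of `(G, μ)`: it is a `μ`-boundary and every `μ`-boundary
is a `G`-equivariant measurable quotient of it. -/
def IsPoissonBoundary {G : Type*} {X : Type} [Group G] [MeasurableSpace G] [MeasurableSpace X]
    (μ : PMF G) (P : Measure (ℕ → G)) (act : G → X → X) (ν : Measure X)
    (bnd : (ℕ → G) → X) : Prop :=
  IsMuBoundary μ P act ν bnd ∧
    ∀ (Y : Type) [MeasurableSpace Y] (actY : G → Y → Y) (lam : Measure Y)
      (bndY : (ℕ → G) → Y), IsMuBoundary μ P actY lam bndY →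
      ∃ π : X → Y, Measurable π ∧ Measure.map π ν = lam ∧
        (∀ g : G, ∀ᵐ x ∂ν, π (act g x) = actY g (π x)) ∧
        (∀ᵐ w ∂P, π (bnd w) = bndY w)

/-- Weak-* convergence `(wₙ)_* ν → δ_z` of the translates of `ν` along a trajectory `w` towards
the point mass at `z`. -/
def WeakStarToDirac {G : Type*} [Monoid G] [MulAction G S1] (ν : Measure S1)
    (w : ℕ → G) (z : S1) : Prop :=
  ∀ f : C(S1, ℝ), Tendsto (fun n => ∫ x, f ((w n) • x) ∂ν) atTop (𝓝 (f z))

/-! ## Disintegration and conditional entropy -/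

/-- `Pc` is the disintegration `ℙ = ∫_X ℙ^ξ dν(ξ)` of the trajectory measure `P` with respect to
the boundary map `bnd : G^ℕ → X`. -/
structure IsDisintegration {G X : Type*} [MeasurableSpace G] [MeasurableSpace X]
    (P : Measure (ℕ → G)) (ν : Measure X) (bnd : (ℕ → G) → X)
    (Pc : X → Measure (ℕ → G)) : Prop where
  meas : ∀ s : Set (ℕ → G), MeasurableSet s → Measurable fun ξ => Pc ξ s
  prob : ∀ᵐ ξ ∂ν, IsProbabilityMeasure (Pc ξ)
  fiber : ∀ᵐ ξ ∂ν, Pc ξ {w | bnd w ≠ ξ} = 0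
  total : ∀ s : Set (ℕ → G), MeasurableSet s → P s = ∫⁻ ξ, Pc ξ s ∂ν

/-- The conditional entropy `H_ξ(αₙ)` of the position of the random walk at time `n` with
respect to the conditional measure `ℙ^ξ`. -/
def condEntropyAt {G X : Type*} [MeasurableSpace G] (Pc : X → Measure (ℕ → G)) (n : ℕ)
    (ξ : X) : ℝ :=
  ∑' g : G, -(((Pc ξ) {w | w n = g}).toReal * Real.log ((Pc ξ) {w | w n = g}).toReal)

/-- The mean conditional entropy `H_𝐗(αₙ) = ∫_X H_ξ(αₙ) dν(ξ)` of the time-`n` position over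
the `μ`-boundary `(X, ν)`. -/
def meanCondEntropy {G X : Type*} [MeasurableSpace G] [MeasurableSpace X] (ν : Measure X)
    (Pc : X → Measure (ℕ → G)) (n : ℕ) : ℝ :=
  ∫ ξ, condEntropyAt Pc n ξ ∂ν

/-! ## Collections and trajectories (Erschler's method) -/

/-- A collection of length `n`: a set of times `I = {i₁ < ⋯ < i_k} ⊆ {1, …, n}` together with
prescribed increments `x_l ∈ S` for the remaining times `l ∈ {1, …, n} ∖ I` (the values of `x`
outside these times are normalised to `1`). -/
structure Collection (G : Type*) [One G] (S : Set G) (n : ℕ) where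
  I : Finset ℕ
  hI : ∀ i ∈ I, 1 ≤ i ∧ i ≤ n
  x : ℕ → G
  hx_mem : ∀ l, 1 ≤ l → l ≤ n → l ∉ I → x l ∈ S
  hx_canon : ∀ l, l = 0 ∨ n < l ∨ l ∈ I → x l = 1

/-- The set of trajectories `T^{a,b}(q)` associated with a collection `q`: trajectories starting
at the identity, with jump `x_l` at each time `l ∉ I` and jump `a` or `b` at each time of `I`
(normalised to be constant after time `n`). -/
def trajSet {G : Type*} [Group G] {S : Set G} {n : ℕ} (a b : G) (q : Collection G S n) :
    Set (ℕ → G) :=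
  {y | y 0 = 1 ∧
    (∀ l, 1 ≤ l → l ≤ n →
      (l ∈ q.I → (y l = y (l - 1) * a ∨ y l = y (l - 1) * b)) ∧
      (l ∉ q.I → y l = y (l - 1) * q.x l)) ∧
    ∀ l, n ≤ l → y l = y n}

/-- `T^{a,b}(q)` is satisfactory: distinct trajectories in it arrive at distinct group elements
at time `n`. -/
def Satisfactory {G : Type*} [Group G] {S : Set G} {n : ℕ} (a b : G)
    (q : Collection G S n) : Prop :=
  ∀ y ∈ trajSet a b q, ∀ y' ∈ trajSet a b q, y ≠ y' → y n ≠ y' n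

/-- The cylinder `[y]` of infinite trajectories agreeing with `y` up to time `n`. -/
def cylOf {G : Type*} (n : ℕ) (y : ℕ → G) : Set (ℕ → G) :=
  {w | ∀ k, 1 ≤ k → k ≤ n → w k = y k}

/-! ## Domination of intervals and good collections -/

/-- `I₁` dominates `I₂` if they are disjoint or the interior of `I₁` contains `I₂`. -/
def Dominates (I₁ I₂ : Set S1) : Prop :=
  Disjoint I₁ I₂ ∨ I₂ ⊆ interior I₁

/-- The defining property of `ξ`-good collections (without maximality): for every trajectory in
`T^{a,e}(q)` and every time `i ∈ I`, the interval `y_{i-1}(J)` dominates all earlier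
translates `y_l(J)`, and `y_i⁻¹(ξ) ∉ J`. -/
def GoodCore {G : Type*} [Group G] [MulAction G S1] {S : Set G} {n : ℕ} (a : G) (J : Set S1)
    (ξ : S1) (q : Collection G S n) : Prop :=
  ∀ y ∈ trajSet a 1 q, ∀ i ∈ q.I,
    (∀ l, l < i - 1 →
      Dominates ((fun z : S1 => y (i - 1) • z) '' J) ((fun z : S1 => y l • z) '' J)) ∧
    (y i)⁻¹ • ξ ∉ J

/-- `q` is `ξ`-good: it satisfies `GoodCore` and its set of times is maximal among subsets of
`{1, …, n}` with this property. -/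
def IsXiGood {G : Type*} [Group G] [MulAction G S1] {S : Set G} {n : ℕ} (a : G) (J : Set S1)
    (ξ : S1) (q : Collection G S n) : Prop :=
  GoodCore a J ξ q ∧
    ∀ q' : Collection G S n, q.I ⊂ q'.I → (∀ l ∉ q'.I, q'.x l = q.x l) →
      ¬ GoodCore a J ξ q'

/-! ## The counting random variables `Z` and `W` -/

/-- The random variable `Z^J_{n,s}`: the number of times `1 ≤ k ≤ ⌈n/s⌉` such that the
interval `w_{ks}(J)` dominates `w_{js}(J)` for all `0 ≤ j ≤ k - 1`. -/
def Zvar {G : Type*} [Monoid G] [MulAction G S1] (J : Set S1) (n s : ℕ) (w : ℕ → G) : ℕ :=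
  Nat.card {k : ℕ // 1 ≤ k ∧ k ≤ ⌈(n : ℝ) / (s : ℝ)⌉₊ ∧
    ∀ j < k, Dominates ((fun z : S1 => w (k * s) • z) '' J) ((fun z : S1 => w (j * s) • z) '' J)}

/-- The random variable `Wₙ`: the number of times `1 ≤ k ≤ n` such that `w_k(J)` dominates all
earlier `w_j(J)`, `w_k⁻¹(ξ(w)) ∉ J`, and the increment `g_{k+1} ∈ {a, e}`. -/
def Wvar {G : Type*} [Group G] [MulAction G S1] (J : Set S1) (a : G) (bnd : (ℕ → G) → S1)
    (n : ℕ) (w : ℕ → G) : ℕ :=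
  Nat.card {k : ℕ // 1 ≤ k ∧ k ≤ n ∧
    (∀ j < k, Dominates ((fun z : S1 => w k • z) '' J) ((fun z : S1 => w j • z) '' J)) ∧
    (w k)⁻¹ • bnd w ∉ J ∧
    ((w k)⁻¹ * w (k + 1) = a ∨ (w k)⁻¹ * w (k + 1) = 1)}

/-! ## Piecewise affine homeomorphisms, breakpoints and configurations -/

/-- `g` acts affinely (with positive slope) on the arc that is the projection of `(t₁, t₂)`. -/
def AffineOnArc {G : Type*} [Monoid G] [MulAction G S1] (g : G) (t₁ t₂ : ℝ) : Prop :=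
  ∃ a b : ℝ, 0 < a ∧ ∀ t ∈ Set.Ioo t₁ t₂, g • toS1 t = toS1 (a * t + b)

/-- `g` acts as a piecewise affine homeomorphism: there is a finite set `D` of points of the
circle away from which `g` is affine. -/
def IsPAff {G : Type*} [Monoid G] [MulAction G S1] (g : G) : Prop :=
  ∃ D : Finset ℝ, ∀ t₁ t₂ : ℝ, t₁ < t₂ →
    (∀ t ∈ Set.Ioo t₁ t₂, ∀ d ∈ D, toS1 t ≠ toS1 d) → AffineOnArc g t₁ t₂

/-- `g` has right derivative (slope) `a` at `x`. -/
def HasRightSlope {G : Type*} [Monoid G] [MulAction G S1] (g : G) (x : S1) (a : ℝ) : Prop :=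
  0 < a ∧ ∃ t₀ b ε : ℝ, 0 < ε ∧ toS1 t₀ = x ∧
    ∀ t ∈ Set.Ico t₀ (t₀ + ε), g • toS1 t = toS1 (a * t + b)

/-- `g` has left derivative (slope) `a` at `x`. -/
def HasLeftSlope {G : Type*} [Monoid G] [MulAction G S1] (g : G) (x : S1) (a : ℝ) : Prop :=
  0 < a ∧ ∃ t₀ b ε : ℝ, 0 < ε ∧ toS1 t₀ = x ∧
    ∀ t ∈ Set.Ioc (t₀ - ε) t₀, g • toS1 t = toS1 (a * t + b)

open Classical in
/-- The right slope of `g` at `x` (junk value `1` if it does not exist). -/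
def rightSlope {G : Type*} [Monoid G] [MulAction G S1] (g : G) (x : S1) : ℝ :=
  if h : ∃ a : ℝ, HasRightSlope g x a then h.choose else 1

open Classical in
/-- The left slope of `g` at `x` (junk value `1` if it does not exist). -/
def leftSlope {G : Type*} [Monoid G] [MulAction G S1] (g : G) (x : S1) : ℝ :=
  if h : ∃ a : ℝ, HasLeftSlope g x a then h.choose else 1

/-- The set of breakpoints of `g`: the points where the derivative of `g` is not defined
(no common one-sided slope). -/
def brkSet {G : Type*} [Monoid G] [MulAction G S1] (g : G) : Set S1 :=
  {x : S1 | ¬ ∃ a : ℝ, HasRightSlope g x a ∧ HasLeftSlope g x a}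

/-- The set `Br` of all breakpoints of elements of `G`. -/
def BrSetAll (G : Type*) [Monoid G] [MulAction G S1] : Set S1 :=
  ⋃ g : G, brkSet g

/-- The configuration `C_g(x) = log((g⁻¹)'(x⁺)) − log((g⁻¹)'(x⁻))` recording the jump of the
derivative of `g⁻¹` at `x`. -/
def config {G : Type*} [Group G] [MulAction G S1] (g : G) (x : S1) : ℝ :=
  Real.log (rightSlope g⁻¹ x) - Real.log (leftSlope g⁻¹ x)

/-- The action `g · C = C_g + S_g C` of `G` on configurations, where `(S_g C)(x) = C(g⁻¹ x)`. -/
def confAct {G : Type*} [Group G] [MulAction G S1] (g : G) (C : S1 → ℝ) : S1 → ℝ :=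
  fun x => config g x + C (g⁻¹ • x)


/-! ### Auxiliary lemmas -/

lemma coe_toIcoMod'' (a s : ℝ) : toS1 (toIcoMod one_pos a s) = toS1 s := by
  have : toIcoMod one_pos a s - s ∈ AddSubgroup.zmultiples (1:ℝ) := by
    rw [toIcoMod_sub_self]
    simpa using AddSubgroup.zsmul_mem _ (AddSubgroup.mem_zmultiples (1:ℝ))
      (-(toIcoDiv one_pos a s))
  exact QuotientAddGroup.eq_iff_sub_mem.mpr this

lemma continuous_toS1 : Continuous toS1 := AddCircle.continuous_mk' 1

lemma isCompact_of_isClosedArc {I : Set S1} (hI : IsClosedArc I) : IsCompact I := by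
  obtain ⟨a, b, -, -, rfl⟩ := hI
  exact isCompact_Icc.image continuous_toS1

/-- Key lemma: a proper closed arc can be mapped into any nonempty open set. -/
lemma contract_into_open {G : Type} [Group G] [MulAction G S1]
    (hhomeo : ActsByHomeos G) (hmin : MinimalAct G) (hprox : ProximalAct G)
    {I : Set S1} (hI : IsClosedArc I) (hIu : I ≠ Set.univ) (hIne : I.Nonempty)
    {U : Set S1} (hUo : IsOpen U) (hUne : U.Nonempty) :
    ∃ g : G, (fun x : S1 => g • x) '' I ⊆ U := by
  have hg : ∀ n : ℕ, ∃ g : G, Metric.diam ((fun x : S1 => g • x) '' I) < 1 / (n + 1) :=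
    fun n => hprox I hI hIu _ (by positivity)
  choose g hgd using hg
  obtain ⟨x₀, hx₀⟩ := hIne
  set u : ℕ → S1 := fun n => g n • x₀ with hu
  obtain ⟨p, -, φ, hφ, hup⟩ := isCompact_univ.tendsto_subseq (fun n => Set.mem_univ (u n))
  obtain ⟨y, hyo, hyU⟩ := (hmin p).exists_mem_open hUo hUne
  obtain ⟨h, rfl⟩ := MulAction.mem_orbit_iff.mp hyo
  have hc : Continuous fun x : S1 => h • x := hhomeo h
  have hnhds : (fun x : S1 => h • x) ⁻¹' U ∈ 𝓝 p :=
    hc.continuousAt.preimage_mem_nhds (hUo.mem_nhds hyU)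
  obtain ⟨r, hr, hball⟩ := Metric.mem_nhds_iff.mp hnhds
  obtain ⟨N₁, hN₁⟩ := (Metric.tendsto_atTop.mp hup) (r / 2) (by positivity)
  obtain ⟨N₂, hN₂⟩ := exists_nat_gt (2 / r)
  set n := max N₁ N₂ with hn
  set m := φ n with hm
  have hmn : (n : ℕ) ≤ m := hφ.le_apply
  have hdiam : Metric.diam ((fun x : S1 => g m • x) '' I) < r / 2 := by
    refine lt_of_lt_of_le (hgd m) ?_
    rw [div_le_div_iff₀ (by positivity) (by positivity)]
    have h1 : (2 : ℝ) / r < N₂ + 1 := hN₂.trans (by norm_num)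
    have h2 : (N₂ : ℝ) + 1 ≤ (m : ℝ) + 1 := by
      have : (N₂ : ℝ) ≤ m := by
        exact_mod_cast (le_max_right N₁ N₂).trans hmn
      linarith
    have : (2 : ℝ) / r < (m : ℝ) + 1 := lt_of_lt_of_le h1 h2
    rw [div_lt_iff₀ hr] at this
    linarith
  have hdp : dist (u m) p < r / 2 := hN₁ n (le_max_left _ _)
  refine ⟨h * g m, ?_⟩
  rintro y ⟨z, hz, rfl⟩
  have hmem : g m • z ∈ (fun x : S1 => g m • x) '' I := ⟨z, hz, rfl⟩
  have hmem' : u m ∈ (fun x : S1 => g m • x) '' I := ⟨x₀, hx₀, rfl⟩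
  have hbdd : Bornology.IsBounded ((fun x : S1 => g m • x) '' I) :=
    ((isCompact_of_isClosedArc hI).image (hhomeo (g m))).isBounded
  have hd1 : dist (g m • z) (u m) ≤ Metric.diam ((fun x : S1 => g m • x) '' I) :=
    Metric.dist_le_diam_of_mem hbdd hmem hmem'
  have : dist (g m • z) p < r := by
    calc dist (g m • z) p ≤ dist (g m • z) (u m) + dist (u m) p := dist_triangle _ _ _
      _ < r / 2 + r / 2 := add_lt_add (hd1.trans_lt hdiam) hdp
      _ = r := by ring
  have : g m • z ∈ (fun x : S1 => h • x) ⁻¹' U := hball this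
  simpa [mul_smul] using this

/-- For a minimal and proximal action of a countable group `G` on `S¹` by
orientation-preserving homeomorphisms: any nonempty proper closed interval with nonempty
interior can be mapped into any other by some `g ∈ G`; if moreover the action is topologically
nonfree then every nontrivial interval contains the support of some nontrivial element. -/
theorem contraction_into_intervals_and_small_support
    {G : Type} [Group G] [Countable G] [MulAction G S1]
    (hhomeo : ActsByHomeos G) (hfaith : FaithfulAct G) (horient : ∀ g : G, OrientPres g)
    (hmin : MinimalAct G) (hprox : ProximalAct G) :
    (∀ I J : Set S1, IsClosedArc I → IsClosedArc J → I ≠ Set.univ → J ≠ Set.univ →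
      I.Nonempty → J.Nonempty → (interior I).Nonempty → (interior J).Nonempty →
      ∃ g : G, (fun x : S1 => g • x) '' I ⊆ J) ∧
    (TopNonfree G → ∀ J : Set S1, IsArc J → (interior J).Nonempty →
      ∃ a : G, a ≠ 1 ∧ homSupp a ⊆ J) := by
  constructor
  · intro I J hI hJ hIu hJu hIne hJne hIint hJint
    obtain ⟨g, hg⟩ := contract_into_open hhomeo hmin hprox hI hIu hIne isOpen_interior hJint
    exact ⟨g, hg.trans interior_subset⟩
  · intro hnf J hJarc hJint
    obtain ⟨g0, hg0ne, hfix⟩ := hnf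
    obtain ⟨x₀, hx₀⟩ := hfix
    obtain ⟨t₀, rfl⟩ := QuotientAddGroup.mk_surjective x₀
    -- find δ with toS1 '' Ioo (t₀ - δ) (t₀ + δ) ⊆ Fix g0
    have hV : IsOpen (toS1 ⁻¹' interior {x : S1 | g0 • x = x}) :=
      isOpen_interior.preimage continuous_toS1
    have ht₀V : t₀ ∈ toS1 ⁻¹' interior {x : S1 | g0 • x = x} := hx₀
    obtain ⟨δ₀, hδ₀, hball⟩ := Metric.isOpen_iff.mp hV t₀ ht₀V
    set δ : ℝ := min δ₀ (1/4) with hδdef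
    have hδpos : 0 < δ := lt_min hδ₀ (by norm_num)
    have hδq : δ ≤ 1/4 := min_le_right _ _
    have hfixmem : ∀ s : ℝ, |s - t₀| < δ → g0 • toS1 s = toS1 s := by
      intro s hs
      have : s ∈ Metric.ball t₀ δ₀ := by
        rw [Metric.mem_ball, Real.dist_eq]
        exact hs.trans_le (min_le_left _ _)
      have h' : toS1 s ∈ {x : S1 | g0 • x = x} := interior_subset (hball this)
      exact h'
    set K : Set S1 := toS1 '' Set.Icc (t₀ + δ) (t₀ + 1 - δ) with hK
    have hKarc : IsClosedArc K := ⟨t₀ + δ, t₀ + 1 - δ, by linarith, by linarith, rfl⟩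
    have hKne : K.Nonempty := ⟨toS1 (t₀ + δ), ⟨t₀ + δ, ⟨le_refl _, by linarith⟩, rfl⟩⟩
    have hKuniv : K ≠ Set.univ := by
      intro hcon
      have : toS1 t₀ ∈ K := hcon ▸ Set.mem_univ _
      obtain ⟨s, hs, heq⟩ := this
      have hsIco : s ∈ Set.Ico t₀ (t₀ + 1) := ⟨by linarith [hs.1], by linarith [hs.2]⟩
      have ht₀Ico : t₀ ∈ Set.Ico t₀ (t₀ + 1) := ⟨le_refl _, by linarith⟩
      have : s = t₀ := (AddCircle.coe_eq_coe_iff_of_mem_Ico hsIco ht₀Ico).mp heq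
      linarith [hs.1]
    -- the non-fixed set of g0 is inside K
    have hsupp : {x : S1 | g0 • x ≠ x} ⊆ K := by
      intro x hx
      by_contra hxK
      apply hx
      obtain ⟨s', rfl⟩ := QuotientAddGroup.mk_surjective x
      set s := toIcoMod one_pos t₀ s' with hsdef
      have hscoe : toS1 s = toS1 s' := coe_toIcoMod'' t₀ s'
      have hsIco : s ∈ Set.Ico t₀ (t₀ + 1) := toIcoMod_mem_Ico one_pos t₀ s'
      rcases le_or_gt (t₀ + δ) s with h1 | h1
      · rcases le_or_gt s (t₀ + 1 - δ) with h2 | h2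
        · exact absurd (⟨s, ⟨h1, h2⟩, hscoe⟩ : (toS1 s' : S1) ∈ K) hxK
        · -- s ∈ (t₀ + 1 - δ, t₀ + 1); use s - 1
          have hcoe2 : toS1 (s - 1) = toS1 s := by
            have h0 : ((s - 1 + 1 : ℝ) : S1) = ((s - 1 : ℝ) : S1) :=
              AddCircle.coe_add_period 1 (s - 1)
            rw [show s - 1 + 1 = s by ring] at h0
            exact h0.symm
          have habs : |s - 1 - t₀| < δ := by
            rw [abs_lt]
            constructor
            · linarith
            · linarith [hsIco.2]
          show g0 • toS1 s' = toS1 s'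
          rw [← hscoe, ← hcoe2]
          exact hfixmem _ habs
      · have habs : |s - t₀| < δ := by
          rw [abs_lt]
          constructor
          · linarith [hsIco.1]
          · linarith
        show g0 • toS1 s' = toS1 s'
        rw [← hscoe]
        exact hfixmem _ habs
    -- map K into the interior of J
    obtain ⟨h, hh⟩ := contract_into_open hhomeo hmin hprox hKarc hKuniv hKne
      isOpen_interior hJint
    refine ⟨h * g0 * h⁻¹, ?_, ?_⟩
    · intro hcon
      apply hg0ne
      have : g0 = h⁻¹ * (h * g0 * h⁻¹) * h := by group
      rw [hcon] at this
      simpa using this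
    · have hset : {x : S1 | (h * g0 * h⁻¹) • x ≠ x} ⊆ (fun x : S1 => h • x) '' K := by
        intro x hx
        have hne : g0 • (h⁻¹ • x) ≠ h⁻¹ • x := by
          intro he
          apply hx
          calc (h * g0 * h⁻¹) • x = h • g0 • h⁻¹ • x := by rw [mul_smul, mul_smul]
            _ = h • h⁻¹ • x := by rw [he]
            _ = x := by rw [smul_inv_smul]
        exact ⟨h⁻¹ • x, hsupp hne, smul_inv_smul h x⟩
      have hcl : IsClosed ((fun x : S1 => h • x) '' K) :=
        ((isCompact_of_isClosedArc hKarc).image (hhomeo h)).isClosed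
      have : homSupp (h * g0 * h⁻¹) ⊆ (fun x : S1 => h • x) '' K :=
        closure_minimal hset hcl
      exact this.trans (hh.trans interior_subset)

end
end

section
/- Let G be a countable subgroup of Homeo₊(S¹) acting minimally and proximally on S¹, let μ be a nondegenerate probability measure on G, let a ∈ G∖{e_G} be such that S¹∖supp(a) has nonempty interior, and let J ⊊ S¹ be the smallest closed interval containing supp(a). Fix a collection q = (x, i₁,…,i_k) of length n and two trajectories (y₁,…,yₙ), (ỹ₁,…,ỹₙ) ∈ T^{a,e_G}(q). Then for each 1 ≤ r ≤ k the following are equivalent: (1) for all 0 ≤ l < i_r − 1 the interval y_{i_r−1}(J) dominates y_l(J); (2) for all 0 ≤ l < i_r − 1 the interval ỹ_{i_r−1}(J) dominates ỹ_l(J). Moreover, whenever these conditions hold for all 1 ≤ r ≤ k, one has y_{i_r−1}(J) = ỹ_{i_r−1}(J) for all r, and the set of trajectories T^{a,e_G}(q) is satisfactory. -/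
open MeasureTheory Filter Topology Set

noncomputable section

/-! ### Auxiliary lemmas for the good collections lemma -/

section GoodCollectionsAux

lemma toS1_eq_iff {t s : ℝ} : toS1 t = toS1 s ↔ ∃ k : ℤ, t - s = k := by
  rw [toS1, toS1, QuotientAddGroup.eq_iff_sub_mem]
  constructor
  · intro h
    obtain ⟨k, hk⟩ := (AddSubgroup.mem_zmultiples_iff).mp h
    exact ⟨k, by simpa using hk.symm⟩
  · rintro ⟨k, hk⟩
    exact (AddSubgroup.mem_zmultiples_iff).mpr ⟨k, by simpa using hk.symm⟩

lemma exists_rep_Ico (d : ℝ) (z : S1) : ∃ t : ℝ, t ∈ Set.Ico d (d + 1) ∧ toS1 t = z := by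
  obtain ⟨t₀, rfl⟩ := QuotientAddGroup.mk_surjective z
  refine ⟨t₀ - ⌊t₀ - d⌋, ⟨?_, ?_⟩, ?_⟩
  · linarith [Int.floor_le (t₀ - d)]
  · linarith [Int.lt_floor_add_one (t₀ - d)]
  · exact toS1_eq_iff.mpr ⟨-⌊t₀ - d⌋, by push_cast; ring⟩

lemma isCompact_of_closedArc {J : Set S1} (h : IsClosedArc J) : IsCompact J := by
  obtain ⟨α, β, _, _, rfl⟩ := h
  exact isCompact_Icc.image continuous_toS1

variable {G : Type} [Group G] [MulAction G S1]

lemma smul_image_mul' (g h : G) (W : Set S1) :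
    (fun z : S1 => (g * h) • z) '' W
      = (fun z : S1 => g • z) '' ((fun z : S1 => h • z) '' W) := by
  rw [Set.image_image]
  exact Set.image_congr fun z _ => mul_smul g h z

lemma fix_compl_inv {c : G} {J : Set S1} (hc : ∀ x ∉ J, c • x = x) :
    ∀ x ∉ J, c⁻¹ • x = x := by
  intro x hx
  conv_lhs => rw [← hc x hx]
  rw [inv_smul_smul]

lemma image_eq_of_fix_compl {c : G} {J : Set S1} (hc : ∀ x ∉ J, c • x = x) :
    (fun z : S1 => c • z) '' J = J := by
  apply Set.Subset.antisymm
  · rintro x ⟨w, hw, rfl⟩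
    show c • w ∈ J
    by_contra hx
    have h2 : c • w = w := smul_left_cancel c (hc _ hx)
    exact hx (by rw [h2]; exact hw)
  · intro x hx
    refine ⟨c⁻¹ • x, ?_, smul_inv_smul c x⟩
    by_contra h
    have h2 : c • (c⁻¹ • x) = c⁻¹ • x := hc _ h
    rw [smul_inv_smul] at h2
    exact h (h2 ▸ hx)

noncomputable def smulHomeo (hhomeo : ActsByHomeos G) (g : G) : S1 ≃ₜ S1 :=
  { MulAction.toPerm g with
    continuous_toFun := hhomeo g
    continuous_invFun := hhomeo g⁻¹ }

lemma smul_image_interior (hhomeo : ActsByHomeos G) (g : G) (M : Set S1) :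
    (fun z : S1 => g • z) '' interior M = interior ((fun z : S1 => g • z) '' M) :=
  (smulHomeo hhomeo g).image_interior M

lemma conj_image_dom (hhomeo : ActsByHomeos G) (c g : G) {J M : Set S1}
    (hc : ∀ x ∉ J, c • x = x)
    (hdom : Dominates M ((fun z : S1 => g • z) '' J)) :
    (fun z : S1 => (g * c * g⁻¹) • z) '' M = M := by
  rcases hdom with hd | hs
  · have hfix : ∀ p ∈ M, (g * c * g⁻¹) • p = p := by
      intro p hp
      have hpK : p ∉ (fun z : S1 => g • z) '' J := fun h => Set.disjoint_left.mp hd hp h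
      have hgp : g⁻¹ • p ∉ J := fun h => hpK ⟨g⁻¹ • p, h, smul_inv_smul g p⟩
      calc (g * c * g⁻¹) • p = g • c • g⁻¹ • p := by rw [mul_smul, mul_smul]
        _ = g • g⁻¹ • p := by rw [hc _ hgp]
        _ = p := smul_inv_smul g p
    calc (fun z : S1 => (g * c * g⁻¹) • z) '' M = id '' M := Set.image_congr hfix
      _ = M := Set.image_id M
  · have key : ∀ c' : G, (∀ x ∉ J, c' • x = x) → ∀ p ∈ M, (g * c' * g⁻¹) • p ∈ M := by
      intro c' hc' p hp
      by_cases hpJ : g⁻¹ • p ∈ J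
      · have h1 : c' • (g⁻¹ • p) ∈ J := by
          rw [← image_eq_of_fix_compl hc']
          exact ⟨g⁻¹ • p, hpJ, rfl⟩
        have h2 : (g * c' * g⁻¹) • p ∈ (fun z : S1 => g • z) '' J :=
          ⟨c' • (g⁻¹ • p), h1, by rw [mul_smul, mul_smul]⟩
        exact interior_subset (hs h2)
      · rw [mul_smul, mul_smul, hc' _ hpJ, smul_inv_smul]
        exact hp
    apply Set.Subset.antisymm
    · rintro x ⟨p, hp, rfl⟩
      exact key c hc p hp
    · intro p hp
      refine ⟨(g * c⁻¹ * g⁻¹) • p, key c⁻¹ (fix_compl_inv hc) p hp, ?_⟩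
      show (g * c * g⁻¹) • (g * c⁻¹ * g⁻¹) • p = p
      rw [← mul_smul]
      have hone : g * c * g⁻¹ * (g * c⁻¹ * g⁻¹) = 1 := by group
      rw [hone, one_smul]

lemma smul_image_eq_self_of_image_eq {d : G} {M : Set S1}
    (hdM : (fun z : S1 => d • z) '' M = M) :
    (fun z : S1 => d⁻¹ • z) '' M = M := by
  conv_lhs => rw [← hdM]
  rw [Set.image_image]
  simp [inv_smul_smul]

lemma dom_of_image (hhomeo : ActsByHomeos G) {d : G} {M N : Set S1}
    (hdM : (fun z : S1 => d • z) '' M = M) (hD : Dominates M N) :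
    Dominates M ((fun z : S1 => d • z) '' N) := by
  rcases hD with hd | hs
  · left
    rw [Set.disjoint_right]
    rintro x ⟨p, hpN, rfl⟩ hxM
    have hpM : p ∈ M := by
      have : d⁻¹ • (d • p) ∈ (fun z : S1 => d⁻¹ • z) '' M := ⟨d • p, hxM, rfl⟩
      rwa [inv_smul_smul, smul_image_eq_self_of_image_eq hdM] at this
    exact Set.disjoint_left.mp hd hpM hpN
  · right
    calc (fun z : S1 => d • z) '' N ⊆ (fun z : S1 => d • z) '' interior M :=
          Set.image_mono hs
      _ = interior ((fun z : S1 => d • z) '' M) := smul_image_interior hhomeo d M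
      _ = interior M := by rw [hdM]

lemma dom_smul (hhomeo : ActsByHomeos G) (g : G) {A B : Set S1} (h : Dominates A B) :
    Dominates ((fun z : S1 => g • z) '' A) ((fun z : S1 => g • z) '' B) := by
  rcases h with hd | hs
  · exact Or.inl ((Set.disjoint_image_iff (MulAction.injective g)).mpr hd)
  · right
    calc (fun z : S1 => g • z) '' B ⊆ (fun z : S1 => g • z) '' interior A :=
          Set.image_mono hs
      _ = interior ((fun z : S1 => g • z) '' A) := smul_image_interior hhomeo g A

/-- The deviation between two trajectories preserves any set dominating all the relevant
translates of `J`. -/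
lemma dev_image {S : Set G} {n : ℕ} {a : G} {q : Collection G S n} {J : Set S1}
    (hhomeo : ActsByHomeos G) (ha : ∀ x ∉ J, a • x = x)
    {u v : ℕ → G} (hu : u ∈ trajSet a 1 q) (hv : v ∈ trajSet a 1 q) :
    ∀ l, l ≤ n → ∀ M : Set S1,
      (∀ j ∈ q.I, j ≤ l → Dominates M ((fun z : S1 => u (j - 1) • z) '' J)) →
      (fun z : S1 => (v l * (u l)⁻¹) • z) '' M = M := by
  intro l
  induction l with
  | zero =>
    intro _ M _
    rw [hu.1, hv.1]
    simp
  | succ l ih =>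
    intro hln M hM
    have hl : l ≤ n := Nat.le_of_succ_le hln
    have hM' : ∀ j ∈ q.I, j ≤ l → Dominates M ((fun z : S1 => u (j - 1) • z) '' J) :=
      fun j hj hjl => hM j hj (Nat.le_succ_of_le hjl)
    have h1 : 1 ≤ l + 1 := Nat.succ_le_succ (Nat.zero_le l)
    by_cases hI : l + 1 ∈ q.I
    · have hus := (hu.2.1 (l + 1) h1 hln).1 hI
      have hvs := (hv.2.1 (l + 1) h1 hln).1 hI
      rw [Nat.add_sub_cancel] at hus hvs
      have hdK : Dominates M ((fun z : S1 => u l • z) '' J) := by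
        have := hM (l + 1) hI le_rfl
        rwa [Nat.add_sub_cancel] at this
      have main : ∀ c : G, (∀ x ∉ J, c • x = x) →
          v (l + 1) * (u (l + 1))⁻¹ = v l * (u l)⁻¹ * (u l * c * (u l)⁻¹) →
          (fun z : S1 => (v (l + 1) * (u (l + 1))⁻¹) • z) '' M = M := by
        intro c hc heqd
        rw [heqd, smul_image_mul', conj_image_dom hhomeo c (u l) hc hdK, ih hl M hM']
      rcases hus with hua | hua <;> rcases hvs with hva | hva
      · exact main 1 (fun x _ => one_smul G x) (by rw [hua, hva]; group)
      · exact main a⁻¹ (fix_compl_inv ha) (by rw [hua, hva]; group)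
      · exact main a ha (by rw [hua, hva]; group)
      · exact main 1 (fun x _ => one_smul G x) (by rw [hua, hva]; group)
    · have hux := (hu.2.1 (l + 1) h1 hln).2 hI
      have hvx := (hv.2.1 (l + 1) h1 hln).2 hI
      rw [Nat.add_sub_cancel] at hux hvx
      have heqd : v (l + 1) * (u (l + 1))⁻¹ = v l * (u l)⁻¹ := by rw [hux, hvx]; group
      rw [heqd]
      exact ih hl M hM'

lemma traj_image_decomp {J : Set S1} (u v : ℕ → G) (l : ℕ) :
    (fun z : S1 => v l • z) '' J
      = (fun z : S1 => (v l * (u l)⁻¹) • z) '' ((fun z : S1 => u l • z) '' J) := by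
  rw [Set.image_image]
  apply Set.image_congr
  intro z _
  rw [← mul_smul, inv_mul_cancel_right]

/-- Main transfer lemma: the domination condition at a time `i ∈ I` transfers between
trajectories, and under it the translates of `J` at time `i - 1` coincide. -/
lemma traj_dom_transfer {S : Set G} {n : ℕ} {a : G} {q : Collection G S n} {J : Set S1}
    (hhomeo : ActsByHomeos G) (ha : ∀ x ∉ J, a • x = x)
    {u v : ℕ → G} (hu : u ∈ trajSet a 1 q) (hv : v ∈ trajSet a 1 q)
    {i : ℕ} (hi : i ∈ q.I)
    (h : ∀ l, l < i - 1 →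
      Dominates ((fun z : S1 => u (i - 1) • z) '' J) ((fun z : S1 => u l • z) '' J)) :
    ((fun z : S1 => v (i - 1) • z) '' J = (fun z : S1 => u (i - 1) • z) '' J) ∧
    ∀ l, l < i - 1 →
      Dominates ((fun z : S1 => v (i - 1) • z) '' J) ((fun z : S1 => v l • z) '' J) := by
  obtain ⟨hi1, hin⟩ := q.hI i hi
  have hMdom : ∀ j ∈ q.I, j ≤ i - 1 →
      Dominates ((fun z : S1 => u (i - 1) • z) '' J) ((fun z : S1 => u (j - 1) • z) '' J) := by
    intro j hj hji
    have hj1 := (q.hI j hj).1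
    exact h (j - 1) (by omega)
  have hin1 : i - 1 ≤ n := by omega
  have hEq : (fun z : S1 => v (i - 1) • z) '' J = (fun z : S1 => u (i - 1) • z) '' J := by
    rw [traj_image_decomp u v (i - 1)]
    exact dev_image hhomeo ha hu hv (i - 1) hin1 _ hMdom
  refine ⟨hEq, fun l hl => ?_⟩
  rw [hEq, traj_image_decomp u v l]
  have hln : l ≤ n := by omega
  exact dom_of_image hhomeo
    (dev_image hhomeo ha hu hv l hln _ (fun j hj hjl => hMdom j hj (by omega))) (h l hl)

end GoodCollectionsAux

section TopologyAux

variable {G : Type} [Group G] [MulAction G S1]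

lemma exists_not_mem_J {a : G} (hacompl : (interior ((homSupp a)ᶜ)).Nonempty)
    {J : Set S1} (hJmin : ∀ J' : Set S1, IsClosedArc J' → homSupp a ⊆ J' → J ⊆ J') :
    ∃ c : ℝ, toS1 c ∉ J := by
  obtain ⟨z, hz⟩ := hacompl
  obtain ⟨c, rfl⟩ := QuotientAddGroup.mk_surjective z
  have hopen : IsOpen (toS1 ⁻¹' interior ((homSupp a)ᶜ)) :=
    IsOpen.preimage continuous_toS1 isOpen_interior
  have hcmem : c ∈ toS1 ⁻¹' interior ((homSupp a)ᶜ) := hz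
  obtain ⟨ε₀, hε₀, hball⟩ := Metric.isOpen_iff.mp hopen c hcmem
  set ε : ℝ := min (ε₀ / 2) 3⁻¹ with hε
  have hεpos : 0 < ε := lt_min (by linarith) (by norm_num)
  have hεle : ε ≤ 3⁻¹ := min_le_right _ _
  have hforb : ∀ t ∈ Set.Ioo (c - ε) (c + ε), toS1 t ∉ homSupp a := by
    intro t ht
    have htb : t ∈ Metric.ball c ε₀ := by
      rw [Metric.mem_ball, Real.dist_eq]
      have hle : ε ≤ ε₀ / 2 := min_le_left _ _
      have h1 : |t - c| < ε := abs_sub_lt_iff.mpr ⟨by linarith [ht.2], by linarith [ht.1]⟩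
      linarith
    exact interior_subset (hball htb)
  have hAarc : IsClosedArc (toS1 '' Set.Icc (c + ε) (c + 1 - ε)) :=
    ⟨c + ε, c + 1 - ε, by linarith [hεle], by linarith [hεpos], rfl⟩
  have hsubA : homSupp a ⊆ toS1 '' Set.Icc (c + ε) (c + 1 - ε) := by
    intro x hx
    obtain ⟨t, htIco, htx⟩ := exists_rep_Ico (c - ε) x
    rcases lt_or_ge t (c + ε) with hlt | hge
    · rcases eq_or_lt_of_le htIco.1 with heq | hgt
      · refine ⟨c + 1 - ε, ⟨by linarith [hεle], le_rfl⟩, ?_⟩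
        rw [← htx, ← heq]
        exact (toS1_eq_iff.mpr ⟨1, by ring⟩)
      · exact absurd hx (htx ▸ hforb t ⟨hgt, hlt⟩)
    · exact ⟨t, ⟨hge, by linarith [htIco.2]⟩, htx⟩
  have hJA := hJmin _ hAarc hsubA
  refine ⟨c, fun hcJ => ?_⟩
  obtain ⟨t, htIcc, hteq⟩ := hJA hcJ
  obtain ⟨k, hk⟩ := toS1_eq_iff.mp hteq
  have h1 : (0:ℝ) < k := by rw [← hk]; linarith [htIcc.1]
  have h2 : (k:ℝ) < 1 := by rw [← hk]; linarith [htIcc.2]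
  have h1' : (0:ℤ) < k := by exact_mod_cast h1
  have h2' : (k:ℤ) < 1 := by exact_mod_cast h2
  omega

lemma endpoint_mem_and_not_interior (hfaith : FaithfulAct G)
    {a : G} (ha : a ≠ 1) (hacompl : (interior ((homSupp a)ᶜ)).Nonempty)
    {J : Set S1} (hJarc : IsClosedArc J) (hJsupp : homSupp a ⊆ J)
    (hJmin : ∀ J' : Set S1, IsClosedArc J' → homSupp a ⊆ J' → J ⊆ J') :
    ∃ p : S1, p ∈ homSupp a ∧ p ∉ interior J := by
  obtain ⟨c, hc⟩ := exists_not_mem_J hacompl hJmin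
  obtain ⟨α, β, hαβ, hβα, hJ⟩ := hJarc
  have hβlt : β < α + 1 := by
    rcases lt_or_eq_of_le hβα with h | h
    · exact h
    · exfalso
      obtain ⟨t, htIco, htc⟩ := exists_rep_Ico α (toS1 c)
      exact hc (by rw [hJ]; exact ⟨t, ⟨htIco.1, by rw [h]; exact le_of_lt htIco.2⟩, htc⟩)
  have hmoved : ∃ x : S1, a • x ≠ x := by
    by_contra hfix
    push_neg at hfix
    exact ha (hfaith a hfix)
  obtain ⟨x₀, hx₀⟩ := hmoved
  have hx₀mem : x₀ ∈ homSupp a := subset_closure hx₀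
  set Q : Set ℝ := Set.Icc α β ∩ toS1 ⁻¹' homSupp a with hQ
  have hQclosed : IsClosed Q :=
    isClosed_Icc.inter (IsClosed.preimage continuous_toS1
      (show IsClosed (homSupp a) from isClosed_closure))
  have hQne : Q.Nonempty := by
    have hx₀J : x₀ ∈ J := hJsupp hx₀mem
    rw [hJ] at hx₀J
    obtain ⟨t, ht, htx⟩ := hx₀J
    exact ⟨t, ht, by rw [Set.mem_preimage]; show toS1 t ∈ homSupp a; rw [htx]; exact hx₀mem⟩
  have hbb : BddBelow Q := ⟨α, fun t ht => ht.1.1⟩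
  have hba : BddAbove Q := ⟨β, fun t ht => ht.1.2⟩
  have hα'Q : sInf Q ∈ Q := hQclosed.csInf_mem hQne hbb
  have hβ'Q : sSup Q ∈ Q := hQclosed.csSup_mem hQne hba
  have hαα' : α ≤ sInf Q := hα'Q.1.1
  have hβ'β : sSup Q ≤ β := hβ'Q.1.2
  have hα'β' : sInf Q ≤ sSup Q := csInf_le_csSup hQne hbb hba
  have hJ'arc : IsClosedArc (toS1 '' Set.Icc (sInf Q) (sSup Q)) :=
    ⟨sInf Q, sSup Q, hα'β', by linarith, rfl⟩
  have hsub : homSupp a ⊆ toS1 '' Set.Icc (sInf Q) (sSup Q) := by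
    intro x hx
    have hxJ : x ∈ J := hJsupp hx
    rw [hJ] at hxJ
    obtain ⟨t, ht, htx⟩ := hxJ
    have htQ : t ∈ Q := ⟨ht, by rw [Set.mem_preimage]; show toS1 t ∈ homSupp a; rw [htx]; exact hx⟩
    exact ⟨t, ⟨csInf_le hbb htQ, le_csSup hba htQ⟩, htx⟩
  have hJJ' := hJmin _ hJ'arc hsub
  have hαJ : toS1 α ∈ J := by rw [hJ]; exact ⟨α, ⟨le_rfl, hαβ⟩, rfl⟩
  obtain ⟨t, htIcc, hteq⟩ := hJJ' hαJ
  obtain ⟨k, hk⟩ := toS1_eq_iff.mp hteq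
  have hk0 : k = 0 := by
    have h1 : (0:ℝ) ≤ k := by rw [← hk]; linarith [htIcc.1]
    have h2 : (k:ℝ) < 1 := by rw [← hk]; linarith [htIcc.2]
    have h1' : (0:ℤ) ≤ k := by exact_mod_cast h1
    have h2' : (k:ℤ) < 1 := by exact_mod_cast h2
    omega
  have htα : t = α := by rw [hk0] at hk; push_cast at hk; linarith
  have hαQ : α ∈ Q := by
    have hinf : sInf Q = α := le_antisymm (htα ▸ htIcc.1) hαα'
    rw [← hinf]
    exact hα'Q
  refine ⟨toS1 α, hαQ.2, fun hint => ?_⟩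
  have cont : Filter.Tendsto (fun s : ℝ => toS1 s) (nhdsWithin α (Set.Iio α)) (nhds (toS1 α)) :=
    (continuous_toS1.tendsto α).mono_left nhdsWithin_le_nhds
  have h1 : ∀ᶠ s in nhdsWithin α (Set.Iio α), toS1 s ∈ interior J :=
    cont.eventually (isOpen_interior.eventually_mem hint)
  have h2 : ∀ᶠ s in nhdsWithin α (Set.Iio α), s ∈ Set.Ioo (β - 1) α :=
    Ioo_mem_nhdsLT_of_mem ⟨by linarith, le_rfl⟩
  obtain ⟨s, hs1, hs2⟩ := (h1.and h2).exists
  have hsJ : toS1 s ∈ J := interior_subset hs1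
  rw [hJ] at hsJ
  obtain ⟨t', ht'Icc, ht'eq⟩ := hsJ
  obtain ⟨k', hk'⟩ := toS1_eq_iff.mp ht'eq
  have h1' : (0:ℝ) < k' := by rw [← hk']; linarith [ht'Icc.1, hs2.2]
  have h2' : (k':ℝ) < 1 := by rw [← hk']; linarith [ht'Icc.2, hs2.1]
  have h1'' : (0:ℤ) < k' := by exact_mod_cast h1'
  have h2'' : (k':ℤ) < 1 := by exact_mod_cast h2'
  omega

lemma exists_moved_avoiding (hhomeo : ActsByHomeos G) (hfaith : FaithfulAct G)
    {a : G} (ha : a ≠ 1) (hacompl : (interior ((homSupp a)ᶜ)).Nonempty)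
    {J : Set S1} (hJarc : IsClosedArc J) (hJsupp : homSupp a ⊆ J)
    (hJmin : ∀ J' : Set S1, IsClosedArc J' → homSupp a ⊆ J' → J ⊆ J')
    (F : Finset ℕ) (L : ℕ → G)
    (hdom : ∀ j ∈ F, Dominates J ((fun z : S1 => L j • z) '' J)) :
    ∃ x : S1, a • x ≠ x ∧ ∀ j ∈ F, x ∉ (fun z : S1 => L j • z) '' J := by
  by_contra hcon
  push_neg at hcon
  have hJcompact := isCompact_of_closedArc hJarc
  have hUclosed : IsClosed (⋃ j ∈ F, (fun z : S1 => L j • z) '' J) :=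
    F.finite_toSet.isClosed_biUnion fun j _ => (hJcompact.image (hhomeo (L j))).isClosed
  have hsubU : homSupp a ⊆ ⋃ j ∈ F, (fun z : S1 => L j • z) '' J := by
    apply closure_minimal ?_ hUclosed
    intro x hx
    obtain ⟨j, hjF, hjx⟩ := hcon x hx
    exact Set.mem_biUnion hjF hjx
  obtain ⟨p, hp, hpint⟩ :=
    endpoint_mem_and_not_interior hfaith ha hacompl hJarc hJsupp hJmin
  obtain ⟨j, hjF, hpj⟩ := Set.mem_iUnion₂.mp (hsubU hp)
  rcases hdom j hjF with hd | hs
  · exact Set.disjoint_left.mp hd (hJsupp hp) hpj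
  · exact hpint (hs hpj)

end TopologyAux

/-- (Lemma on good collections.) Fix a collection `q` and two trajectories
`y, ỹ ∈ T^{a,e}(q)`. For each time `i ∈ I` of `q`, the domination condition for `y` at `i` is
equivalent to the one for `ỹ`; whenever these conditions hold for all times of `q`, the
translates `y_{i-1}(J)` and `ỹ_{i-1}(J)` coincide and `T^{a,e}(q)` is satisfactory. -/
theorem good_collections_lemma
    {G : Type} [Group G] [Countable G] [MulAction G S1]
    [MeasurableSpace G] [MeasurableSingletonClass G]
    (hhomeo : ActsByHomeos G) (hfaith : FaithfulAct G) (horient : ∀ g : G, OrientPres g)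
    (hmin : MinimalAct G) (hprox : ProximalAct G)
    (μ : PMF G) (hnd : Nondeg μ)
    (a : G) (ha : a ≠ 1) (hacompl : (interior ((homSupp a)ᶜ)).Nonempty)
    (J : Set S1) (hJarc : IsClosedArc J) (hJsupp : homSupp a ⊆ J)
    (hJmin : ∀ J' : Set S1, IsClosedArc J' → homSupp a ⊆ J' → J ⊆ J')
    {n : ℕ} (q : Collection G μ.support n)
    (y ytilde : ℕ → G) (hy : y ∈ trajSet a 1 q) (hyt : ytilde ∈ trajSet a 1 q) :
    (∀ i ∈ q.I,
      ((∀ l, l < i - 1 →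
          Dominates ((fun z : S1 => y (i - 1) • z) '' J) ((fun z : S1 => y l • z) '' J)) ↔
        (∀ l, l < i - 1 →
          Dominates ((fun z : S1 => ytilde (i - 1) • z) '' J)
            ((fun z : S1 => ytilde l • z) '' J)))) ∧
    ((∀ i ∈ q.I, ∀ l, l < i - 1 →
        Dominates ((fun z : S1 => y (i - 1) • z) '' J) ((fun z : S1 => y l • z) '' J)) →
      (∀ i ∈ q.I,
        (fun z : S1 => y (i - 1) • z) '' J = (fun z : S1 => ytilde (i - 1) • z) '' J) ∧
      Satisfactory a 1 q) := by
  classical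
  have haJ : ∀ x ∉ J, a • x = x := by
    intro x hx
    by_contra h
    exact hx (hJsupp (subset_closure h))
  constructor
  · intro i hi
    constructor
    · intro h
      exact (traj_dom_transfer hhomeo haJ hy hyt hi h).2
    · intro h
      exact (traj_dom_transfer hhomeo haJ hyt hy hi h).2
  · intro Hy
    constructor
    · intro i hi
      exact (traj_dom_transfer hhomeo haJ hy hyt hi (Hy i hi)).1.symm
    · intro u hu v hv huv heq
      have hex : ∃ l₀, l₀ ≤ n ∧ u l₀ ≠ v l₀ := by
        by_contra hc
        push_neg at hc
        apply huv
        funext l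
        by_cases hl : l ≤ n
        · exact hc l hl
        · rw [hu.2.2 l (by omega), hv.2.2 l (by omega)]
          exact hc n le_rfl
      obtain ⟨l₀, hl₀n, hl₀⟩ := hex
      set m := Nat.findGreatest (fun l => u l ≠ v l) n with hmdef
      have hPm : u m ≠ v m := Nat.findGreatest_spec (P := fun l => u l ≠ v l) hl₀n hl₀
      have hmn : m ≤ n := Nat.findGreatest_le n
      have hm1 : 1 ≤ m := by
        rcases Nat.eq_zero_or_pos m with h0 | h
        · exact absurd (by rw [h0, hu.1, hv.1]) hPm
        · exact h
      have hmlt : m < n := by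
        rcases lt_or_eq_of_le hmn with h | h
        · exact h
        · exact absurd (by rw [h]; exact heq) hPm
      have hm2 : u (m + 1) = v (m + 1) := by
        by_contra hne
        exact Nat.findGreatest_is_greatest (P := fun l => u l ≠ v l) (n := n) (by omega) (by omega) hne
      have hsucc : 1 ≤ m + 1 := by omega
      have hsn : m + 1 ≤ n := by omega
      have key : ∀ u' : ℕ → G, u' ∈ trajSet a 1 q → ∀ v' : ℕ → G, v' ∈ trajSet a 1 q →
          m + 1 ∈ q.I → v' m = u' m * a → False := by
        intro u' hu' v' hv' hMI hrel
        have Ht := traj_dom_transfer hhomeo haJ hy hu' hMI (Hy (m + 1) hMI)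
        have Hu : ∀ l, l < m →
            Dominates ((fun z : S1 => u' m • z) '' J) ((fun z : S1 => u' l • z) '' J) := by
          have h := Ht.2
          rwa [Nat.add_sub_cancel] at h
        have hLdom : ∀ j ∈ q.I.filter (fun j => j ≤ m),
            Dominates J ((fun z : S1 => ((u' m)⁻¹ * u' (j - 1)) • z) '' J) := by
          intro j hj
          rw [Finset.mem_filter] at hj
          have hj1 := (q.hI j hj.1).1
          have hj2 := hj.2
          have hdm := dom_smul hhomeo (u' m)⁻¹ (Hu (j - 1) (by omega))
          rw [← smul_image_mul', ← smul_image_mul', inv_mul_cancel] at hdm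
          simpa using hdm
        obtain ⟨x₀, hx₀mov, hx₀av⟩ :=
          exists_moved_avoiding hhomeo hfaith ha hacompl hJarc hJsupp hJmin _ _ hLdom
        have hfix : (v' m * (u' m)⁻¹) • (u' m • x₀) = u' m • x₀ := by
          have hM : ∀ j ∈ q.I, j ≤ m →
              Dominates {u' m • x₀} ((fun z : S1 => u' (j - 1) • z) '' J) := by
            intro j hj hjm
            left
            rw [Set.disjoint_singleton_left]
            rintro ⟨z, hz, hzw⟩
            apply hx₀av j (Finset.mem_filter.mpr ⟨hj, hjm⟩)
            refine ⟨z, hz, ?_⟩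
            show ((u' m)⁻¹ * u' (j - 1)) • z = x₀
            rw [mul_smul, show u' (j - 1) • z = u' m • x₀ from hzw, inv_smul_smul]
          have h := dev_image hhomeo haJ hu' hv' m hmn {u' m • x₀} hM
          rw [Set.image_singleton] at h
          exact Set.singleton_eq_singleton_iff.mp h
        rw [hrel, mul_smul, mul_smul, inv_smul_smul] at hfix
        exact hx₀mov (smul_left_cancel (u' m) hfix)
      by_cases hMI : m + 1 ∈ q.I
      · have h1 := (hu.2.1 (m + 1) hsucc hsn).1 hMI
        have h2 := (hv.2.1 (m + 1) hsucc hsn).1 hMI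
        rw [Nat.add_sub_cancel] at h1 h2
        rcases h1 with h1 | h1 <;> rcases h2 with h2 | h2
        · exact hPm (mul_right_cancel ((h1.symm.trans hm2).trans h2))
        · refine key u hu v hv hMI ?_
          have hv1 : v m = v (m + 1) := by rw [h2, mul_one]
          rw [hv1, ← hm2, h1]
        · refine key v hv u hu hMI ?_
          have hu1 : u m = u (m + 1) := by rw [h1, mul_one]
          rw [hu1, hm2, h2]
        · apply hPm
          have h3 := (h1.symm.trans hm2).trans h2
          rwa [mul_one, mul_one] at h3
      · have h1 := (hu.2.1 (m + 1) hsucc hsn).2 hMI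
        have h2 := (hv.2.1 (m + 1) hsucc hsn).2 hMI
        rw [Nat.add_sub_cancel] at h1 h2
        exact hPm (mul_right_cancel ((h1.symm.trans hm2).trans h2))

end
end

section
/- Let μ be a nondegenerate probability measure with finite entropy on a countable subgroup G of Homeo₊(S¹) acting minimally and proximally on S¹, let (S¹, ν) be the associated μ-boundary, let a ∈ G∖{e_G} be such that both supp(a) and S¹∖supp(a) have nonempty interior, and let J ⊊ S¹ be the smallest closed interval containing supp(a). Let p > 0, and for each n ≥ 1 let Ξₙ ⊆ S¹ with ν(Ξₙ) ≥ p, and for ν-almost every ξ ∈ Ξₙ let A_{n,ξ} be a set of collections of length n. If every A_{n,ξ} consists of ξ-good collections, then: every T^{a,e_G}(q) with q ∈ A_{n,ξ} is satisfactory; cylinders coming from distinct collections in A_{n,ξ} are disjoint; and for each q = (x, i₁,…,i_k) ∈ A_{n,ξ} and every (y₁,…,yₙ) ∈ T^{a,e_G}(q) one has y_{i_r−1}⁻¹(ξ) ∉ J for all 1 ≤ r ≤ k. -/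
open MeasureTheory Filter Topology Set

noncomputable section

set_option linter.unusedSectionVars false

namespace XGAux

lemma continuous_toS1 : Continuous toS1 := continuous_quotient_mk'

lemma s1_eq_iff {x y : ℝ} : toS1 x = toS1 y ↔ ∃ k : ℤ, y = x + k := by
  unfold toS1
  rw [QuotientAddGroup.eq_iff_sub_mem]
  constructor
  · rintro h
    rcases AddSubgroup.mem_zmultiples_iff.mp h with ⟨k, hk⟩
    exact ⟨-k, by push_cast [zsmul_eq_mul] at hk ⊢; linarith⟩
  · rintro ⟨k, rfl⟩
    exact AddSubgroup.mem_zmultiples_iff.mpr ⟨-k, by push_cast [zsmul_eq_mul]; ring⟩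

lemma s1_rep (c : ℝ) (z : S1) : ∃ s ∈ Ico c (c+1), toS1 s = z := by
  obtain ⟨t, rfl⟩ := Quotient.exists_rep z
  refine ⟨toIcoMod one_pos c t, toIcoMod_mem_Ico one_pos c t, ?_⟩
  have : toS1 t = toS1 (toIcoMod one_pos c t) := by
    rw [s1_eq_iff]
    exact ⟨-(toIcoDiv one_pos c t), by rw [toIcoMod]; push_cast [zsmul_eq_mul]; ring⟩
  exact this.symm

lemma int_gap (k m : ℤ) (h1 : (m:ℝ) < k) (h2 : (k:ℝ) < m + 1) : False := by
  have h1' : m < k := by exact_mod_cast h1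
  have h2' : k < m + 1 := by exact_mod_cast h2
  omega

variable {G : Type*} [Group G] [MulAction G S1]

lemma smul_image_comp (g h : G) (S : Set S1) :
    (fun z : S1 => g • z) '' ((fun z : S1 => h • z) '' S) = (fun z : S1 => (g * h) • z) '' S := by
  rw [← Set.image_comp]
  exact Set.image_congr fun x _ => by simp [mul_smul]

lemma smul_image_one (S : Set S1) : (fun z : S1 => (1:G) • z) '' S = S := by
  simp

lemma mem_smul_image {g : G} {S : Set S1} {x : S1} :
    x ∈ (fun z : S1 => g • z) '' S ↔ g⁻¹ • x ∈ S := by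
  constructor
  · rintro ⟨y, hy, rfl⟩; simpa
  · intro h; exact ⟨g⁻¹ • x, h, by simp⟩

lemma smul_image_subset_iff {g : G} {A B : Set S1} :
    (fun z : S1 => g • z) '' A ⊆ (fun z : S1 => g • z) '' B ↔ A ⊆ B :=
  Set.image_subset_image_iff (MulAction.injective g)

lemma smul_eq_of_not_mem_supp {g : G} {x : S1} (h : x ∉ homSupp g) : g • x = x := by
  by_contra hne
  exact h (subset_closure hne)

lemma smul_mem_supp_of_moved {g : G} {x : S1} (h : g • x ≠ x) : g • x ∈ homSupp g := by
  by_contra hc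
  exact h (MulAction.injective g (smul_eq_of_not_mem_supp hc))

lemma movedSet_inv (g : G) : {x : S1 | g⁻¹ • x ≠ x} = {x : S1 | g • x ≠ x} := by
  ext x
  simp only [Set.mem_setOf_eq, ne_eq, inv_smul_eq_iff]
  rw [eq_comm]

lemma homSupp_inv (g : G) : homSupp g⁻¹ = homSupp g := by
  unfold homSupp; rw [movedSet_inv]

lemma homSupp_one : homSupp (1:G) = (∅ : Set S1) := by
  unfold homSupp
  have : {x : S1 | (1:G) • x ≠ x} = ∅ := by
    ext x; simp
  rw [this, closure_empty]

lemma conj_smul_eq_iff (g c : G) (x : S1) :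
    (g * c * g⁻¹) • x = x ↔ c • (g⁻¹ • x) = g⁻¹ • x := by
  have key : (g * c * g⁻¹) • x = g • (c • (g⁻¹ • x)) := by rw [mul_smul, mul_smul]
  constructor
  · intro h
    apply MulAction.injective g
    show g • (c • g⁻¹ • x) = g • (g⁻¹ • x)
    rw [smul_inv_smul, ← key]
    exact h
  · intro h
    rw [key, h, smul_inv_smul]

lemma conj_smul_ne_iff (g c : G) (x : S1) :
    (g * c * g⁻¹) • x ≠ x ↔ c • (g⁻¹ • x) ≠ g⁻¹ • x :=
  not_congr (conj_smul_eq_iff g c x)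

lemma movedSet_conj (g c : G) :
    {x : S1 | (g * c * g⁻¹) • x ≠ x} = (fun z : S1 => g • z) '' {x : S1 | c • x ≠ x} := by
  ext x
  rw [Set.mem_setOf_eq, conj_smul_ne_iff, mem_smul_image, Set.mem_setOf_eq]

def actHomeo (hh : ActsByHomeos G) (g : G) : S1 ≃ₜ S1 where
  toFun := fun x => g • x
  invFun := fun x => g⁻¹ • x
  left_inv := fun x => inv_smul_smul g x
  right_inv := fun x => smul_inv_smul g x
  continuous_toFun := hh g
  continuous_invFun := hh g⁻¹

lemma smul_image_closure (hh : ActsByHomeos G) (g : G) (S : Set S1) :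
    (fun z : S1 => g • z) '' closure S = closure ((fun z : S1 => g • z) '' S) :=
  (actHomeo hh g).image_closure S

lemma smul_image_interior (hh : ActsByHomeos G) (g : G) (S : Set S1) :
    (fun z : S1 => g • z) '' interior S = interior ((fun z : S1 => g • z) '' S) :=
  (actHomeo hh g).image_interior S

lemma isClosed_smul_image (hh : ActsByHomeos G) (g : G) {S : Set S1} (hS : IsClosed S) :
    IsClosed ((fun z : S1 => g • z) '' S) :=
  (actHomeo hh g).isClosedMap S hS

lemma homSupp_isClosed (g : G) : IsClosed (homSupp g) := isClosed_closure

lemma homSupp_conj (hh : ActsByHomeos G) (g c : G) :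
    homSupp (g * c * g⁻¹) = (fun z : S1 => g • z) '' homSupp c := by
  unfold homSupp
  rw [movedSet_conj, smul_image_closure hh]

lemma dominates_smul (hh : ActsByHomeos G) (g : G) {A B : Set S1} (h : Dominates A B) :
    Dominates ((fun z : S1 => g • z) '' A) ((fun z : S1 => g • z) '' B) := by
  rcases h with h | h
  · exact Or.inl (Set.disjoint_image_of_injective (MulAction.injective g) h)
  · right
    rw [← smul_image_interior hh]
    exact Set.image_mono h

lemma dominates_u {A B C : Set S1} {u : G}
    (hu1 : ∀ x : S1, u • x ≠ x → x ∈ C) (hu2 : ∀ x : S1, u • x ≠ x → u • x ∈ C)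
    (hAC : Dominates A C) (hAB : Dominates A B) :
    Dominates A ((fun z : S1 => u • z) '' B) := by
  by_cases hBC : ∀ x ∈ B, u • x = x
  · have himg : (fun z : S1 => u • z) '' B = B := by
      ext z
      constructor
      · rintro ⟨w, hw, rfl⟩; show u • w ∈ B; rwa [hBC w hw]
      · intro hz; exact ⟨z, hz, hBC z hz⟩
    rwa [himg]
  · push_neg at hBC
    obtain ⟨x₀, hx₀B, hx₀⟩ := hBC
    have hx₀C : x₀ ∈ C := hu1 _ hx₀
    rcases hAC with hAC | hAC <;> rcases hAB with hAB | hAB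
    · left
      rw [Set.disjoint_left] at hAC hAB ⊢
      rintro z hzA ⟨w, hwB, rfl⟩
      have hzA' : u • w ∈ A := hzA
      by_cases hw : u • w = w
      · exact hAB hzA' (by rw [hw]; exact hwB)
      · exact hAC hzA' (hu2 _ hw)
    · exact absurd hx₀C (Set.disjoint_left.mp hAC (interior_subset (hAB hx₀B)))
    · exact absurd hx₀B (Set.disjoint_left.mp hAB (interior_subset (hAC hx₀C)))
    · right
      rintro z ⟨w, hwB, rfl⟩
      show u • w ∈ interior A
      by_cases hw : u • w = w
      · rw [hw]; exact hAB hwB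
      · exact hAC (hu2 _ hw)

variable {a : G}

lemma mapsJ {J : Set S1} (hJsupp : homSupp a ⊆ J) {c : G}
    (hc : c = a ∨ c = a⁻¹ ∨ c = 1) {x : S1} (hx : x ∈ J) : c • x ∈ J := by
  by_cases h : c • x = x
  · rwa [h]
  · have hm : c • x ∈ homSupp c := smul_mem_supp_of_moved h
    have hsc : homSupp c ⊆ J := by
      rcases hc with rfl | rfl | rfl
      · exact hJsupp
      · rw [homSupp_inv]; exact hJsupp
      · rw [homSupp_one]; exact empty_subset J
    exact hsc hm

lemma not_supp_subset_interior (hne : (homSupp a).Nonempty)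
    {J : Set S1} (hJarc : IsClosedArc J) (hJsupp : homSupp a ⊆ J)
    (hJmin : ∀ J' : Set S1, IsClosedArc J' → homSupp a ⊆ J' → J ⊆ J')
    (hcompl : (interior ((homSupp a)ᶜ)).Nonempty) :
    ¬ homSupp a ⊆ interior J := by
  obtain ⟨α, β, hαβ, hβ1, hJeq⟩ := hJarc
  -- Step 1 : find a closed arc J₀ avoiding some point, containing homSupp a
  obtain ⟨x₀, hx₀⟩ := hcompl
  obtain ⟨t₀, rfl⟩ : ∃ t, toS1 t = x₀ := Quotient.exists_rep x₀
  have hV : IsOpen (toS1 ⁻¹' interior ((homSupp a)ᶜ)) :=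
    isOpen_interior.preimage continuous_toS1
  obtain ⟨r, hr, hball⟩ := Metric.isOpen_iff.mp hV t₀ hx₀
  set ε : ℝ := min (r/2) 4⁻¹ with hε
  have hε0 : 0 < ε := lt_min (by linarith) (by norm_num)
  have hε4 : ε ≤ 4⁻¹ := min_le_right _ _
  have hεr : ε < r := lt_of_le_of_lt (min_le_left _ _) (by linarith)
  have hJ0arc : IsClosedArc (toS1 '' Icc (t₀+ε) (t₀+1-ε)) :=
    ⟨t₀+ε, t₀+1-ε, by linarith [hε4], by linarith [hε0], rfl⟩
  have hJ0sub : homSupp a ⊆ toS1 '' Icc (t₀+ε) (t₀+1-ε) := by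
    intro z hz
    obtain ⟨s, hs, rfl⟩ := s1_rep (t₀+ε) z
    rcases le_or_gt s (t₀+1-ε) with hcase | hcase
    · exact ⟨s, ⟨hs.1, hcase⟩, rfl⟩
    · exfalso
      have hsball : s - 1 ∈ Metric.ball t₀ r := by
        rw [Metric.mem_ball, Real.dist_eq, abs_lt]
        have := hs.2
        constructor <;> [linarith; linarith]
      have hmem := hball hsball
      have heq : toS1 (s-1) = toS1 s := s1_eq_iff.mpr ⟨1, by push_cast; ring⟩
      rw [Set.mem_preimage, heq] at hmem
      exact (interior_subset hmem) hz
  have hJJ0 := hJmin _ hJ0arc hJ0sub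
  have ht₀J0 : toS1 t₀ ∉ toS1 '' Icc (t₀+ε) (t₀+1-ε) := by
    rintro ⟨s, hsIcc, hse⟩
    obtain ⟨k, hk⟩ := s1_eq_iff.mp hse
    simp only [Set.mem_Icc] at hsIcc
    exact int_gap k (-1) (by push_cast; linarith [hsIcc.2, hε0, hε4])
      (by push_cast; linarith [hsIcc.1, hε0])
  have ht₀J : toS1 t₀ ∉ J := fun h => ht₀J0 (hJJ0 h)
  -- Step 2 : β < α + 1
  have hβlt : β < α + 1 := by
    rcases lt_or_eq_of_le hβ1 with h | h
    · exact h
    · exfalso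
      apply ht₀J
      rw [hJeq]
      obtain ⟨s, hs, hrep⟩ := s1_rep α (toS1 t₀)
      exact ⟨s, ⟨hs.1, by rw [h]; linarith [hs.2]⟩, hrep⟩
  -- endpoint lemmas
  have hEP1 : toS1 α ∉ interior J := by
    intro h
    have hV' : IsOpen (toS1 ⁻¹' interior J) := isOpen_interior.preimage continuous_toS1
    obtain ⟨r', hr', hball'⟩ := Metric.isOpen_iff.mp hV' α h
    set δ : ℝ := min (r'/2) ((α+1-β)/2) with hδdef
    have hδ0 : 0 < δ := lt_min (by linarith) (by linarith)
    have hδβ : δ < α + 1 - β := lt_of_le_of_lt (min_le_right _ _) (by linarith)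
    have hmem : toS1 (α - δ) ∈ interior J := by
      refine hball' ?_
      rw [Metric.mem_ball, Real.dist_eq, abs_lt]
      constructor <;> [linarith [min_le_left (r'/2) ((α+1-β)/2)];
        linarith [hδ0, min_le_left (r'/2) ((α+1-β)/2)]]
    have : toS1 (α - δ) ∈ J := interior_subset hmem
    rw [hJeq] at this
    obtain ⟨s, hsIcc, hse⟩ := this
    obtain ⟨k, hk⟩ := s1_eq_iff.mp hse
    simp only [Set.mem_Icc] at hsIcc
    exact int_gap k (-1) (by push_cast; linarith [hsIcc.2]) (by push_cast; linarith [hsIcc.1])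
  have hEP2 : toS1 β ∉ interior J := by
    intro h
    have hV' : IsOpen (toS1 ⁻¹' interior J) := isOpen_interior.preimage continuous_toS1
    obtain ⟨r', hr', hball'⟩ := Metric.isOpen_iff.mp hV' β h
    set δ : ℝ := min (r'/2) ((α+1-β)/2) with hδdef
    have hδ0 : 0 < δ := lt_min (by linarith) (by linarith)
    have hδβ : δ < α + 1 - β := lt_of_le_of_lt (min_le_right _ _) (by linarith)
    have hmem : toS1 (β + δ) ∈ interior J := by
      refine hball' ?_
      rw [Metric.mem_ball, Real.dist_eq, abs_lt]
      constructor <;> [linarith [hδ0, min_le_left (r'/2) ((α+1-β)/2)];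
        linarith [min_le_left (r'/2) ((α+1-β)/2)]]
    have : toS1 (β + δ) ∈ J := interior_subset hmem
    rw [hJeq] at this
    obtain ⟨s, hsIcc, hse⟩ := this
    obtain ⟨k, hk⟩ := s1_eq_iff.mp hse
    simp only [Set.mem_Icc] at hsIcc
    exact int_gap k 0 (by push_cast; linarith [hsIcc.2]) (by push_cast; linarith [hsIcc.1])
  -- Step 3 : main argument
  intro hcon
  set Kr : Set ℝ := toS1 ⁻¹' (homSupp a) ∩ Icc α β with hKrdef
  have hKrclosed : IsClosed Kr :=
    ((homSupp_isClosed a).preimage continuous_toS1).inter isClosed_Icc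
  have hKrcomp : IsCompact Kr :=
    isCompact_Icc.of_isClosed_subset hKrclosed Set.inter_subset_right
  have hKrne : Kr.Nonempty := by
    obtain ⟨z, hz⟩ := hne
    have hzJ : z ∈ J := hJsupp hz
    rw [hJeq] at hzJ
    obtain ⟨s, hsIcc, rfl⟩ := hzJ
    exact ⟨s, ⟨hz, hsIcc⟩⟩
  have hbddB : BddBelow Kr := ⟨α, fun x hx => hx.2.1⟩
  have hbddA : BddAbove Kr := ⟨β, fun x hx => hx.2.2⟩
  set α' := sInf Kr with hα'def
  set β' := sSup Kr with hβ'def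
  have hα'mem : α' ∈ Kr := hKrcomp.sInf_mem hKrne
  have hβ'mem : β' ∈ Kr := hKrcomp.sSup_mem hKrne
  have hαα' : α < α' := by
    rcases lt_or_eq_of_le hα'mem.2.1 with h | h
    · exact h
    · exfalso
      apply hEP1
      rw [h]
      exact hcon hα'mem.1
  have hβ'β : β' < β := by
    rcases lt_or_eq_of_le hβ'mem.2.2 with h | h
    · exact h
    · exfalso
      apply hEP2
      rw [← h]
      exact hcon hβ'mem.1
  have hsub' : homSupp a ⊆ toS1 '' Icc α' β' := by
    intro z hz
    have hzJ : z ∈ J := hJsupp hz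
    rw [hJeq] at hzJ
    obtain ⟨s, hsIcc, rfl⟩ := hzJ
    have hsK : s ∈ Kr := ⟨hz, hsIcc⟩
    exact ⟨s, ⟨csInf_le hbddB hsK, le_csSup hbddA hsK⟩, rfl⟩
  have harc' : IsClosedArc (toS1 '' Icc α' β') :=
    ⟨α', β', le_csSup hbddA hα'mem, by linarith [hβ'mem.2.2, hα'mem.2.1], rfl⟩
  have hJsub := hJmin _ harc' hsub'
  have hαmem : toS1 α ∈ toS1 '' Icc α' β' := by
    apply hJsub
    rw [hJeq]
    exact ⟨α, ⟨le_refl α, hαβ⟩, rfl⟩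
  obtain ⟨s, hsIcc, hse⟩ := hαmem
  obtain ⟨k, hk⟩ := s1_eq_iff.mp hse
  simp only [Set.mem_Icc] at hsIcc
  exact int_gap k (-1) (by push_cast; linarith [hsIcc.2, hβ'mem.2.2])
    (by push_cast; linarith [hsIcc.1])

/-! ### Trajectory combinatorics -/

def incr (y : ℕ → G) (l : ℕ) : G := (y (l-1))⁻¹ * y l

lemma y_incr (y : ℕ → G) (l : ℕ) : y l = y (l-1) * incr y l := by
  rw [incr, mul_inv_cancel_left]

lemma incr_succ (y : ℕ → G) (t : ℕ) : incr y (t+1) = (y t)⁻¹ * y (t+1) := by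
  rw [incr, Nat.add_sub_cancel]

def dft (y z : ℕ → G) (t : ℕ) : G := z t * (y t)⁻¹

lemma dft_apply (y z : ℕ → G) (t : ℕ) : z t = dft y z t * y t := by
  rw [dft, inv_mul_cancel_right]

lemma dft_succ (y z : ℕ → G) (t : ℕ) :
    dft y z (t+1) = dft y z t * (y t * (incr z (t+1) * (incr y (t+1))⁻¹) * (y t)⁻¹) := by
  simp only [dft, incr_succ]
  group

lemma dft_succ_eq (y z : ℕ → G) (t : ℕ) (h : incr y (t+1) = incr z (t+1)) :
    dft y z (t+1) = dft y z t := by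
  rw [dft_succ, h, mul_inv_cancel, mul_one, mul_inv_cancel, mul_one]

lemma dft_stab (y z : ℕ → G) (t₀ : ℕ) :
    ∀ s, (∀ m, t₀ < m → m ≤ t₀ + s → incr y m = incr z m) → dft y z (t₀ + s) = dft y z t₀ := by
  intro s
  induction s with
  | zero => intro _; rfl
  | succ s ih =>
    intro h
    rw [show t₀ + (s+1) = (t₀+s)+1 from rfl, dft_succ_eq _ _ _ (h (t₀+s+1) (by omega) (by omega))]
    exact ih fun m hm hm' => h m hm (by omega)

lemma dft_moved {J : Set S1} {y z : ℕ → G} (h0 : y 0 = z 0)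
    (H : ∀ m, 1 ≤ m → homSupp (incr z m * (incr y m)⁻¹) ⊆ J) :
    ∀ t (x : S1), dft y z t • x ≠ x →
      ∃ m, 1 ≤ m ∧ m ≤ t ∧ incr y m ≠ incr z m ∧ x ∈ (fun w : S1 => y (m-1) • w) '' J := by
  intro t
  induction t with
  | zero =>
    intro x hx
    exact absurd (by rw [dft, ← h0, mul_inv_cancel, one_smul]) hx
  | succ t ih =>
    intro x hx
    rw [dft_succ] at hx
    set w : G := y t * (incr z (t+1) * (incr y (t+1))⁻¹) * (y t)⁻¹ with hw
    by_cases hwx : w • x = x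
    · have hd : dft y z t • x ≠ x := by
        intro hc
        apply hx
        rw [mul_smul, hwx, hc]
      obtain ⟨m, h1, h2, h3, h4⟩ := ih x hd
      exact ⟨m, h1, by omega, h3, h4⟩
    · have hδ : (incr z (t+1) * (incr y (t+1))⁻¹) • ((y t)⁻¹ • x) ≠ (y t)⁻¹ • x :=
        (conj_smul_ne_iff (y t) _ x).mp hwx
      refine ⟨t+1, by omega, le_refl _, ?_, ?_⟩
      · intro he
        apply hδ
        rw [← he, mul_inv_cancel, one_smul]
      · have hmem : (y t)⁻¹ • x ∈ J := H (t+1) (by omega) (subset_closure hδ)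
        exact ⟨(y t)⁻¹ • x, hmem, by simp⟩

/-! ### Trajectory lemmas for collections -/

section Collections

variable {S : Set G} {n : ℕ}

lemma y_incr_succ (y : ℕ → G) (t : ℕ) : y (t+1) = y t * incr y (t+1) := by
  rw [incr_succ, mul_inv_cancel_left]

lemma traj_incr_I {q : Collection G S n} {y : ℕ → G} (hy : y ∈ trajSet a 1 q) {l : ℕ}
    (h1 : 1 ≤ l) (h2 : l ≤ n) (hl : l ∈ q.I) : incr y l = a ∨ incr y l = 1 := by
  rcases (hy.2.1 l h1 h2).1 hl with h | h
  · left; rw [incr, h, inv_mul_cancel_left]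
  · right; rw [incr, h, inv_mul_cancel_left]

lemma traj_incr_not_I {q : Collection G S n} {y : ℕ → G} (hy : y ∈ trajSet a 1 q) {l : ℕ}
    (h1 : 1 ≤ l) (h2 : l ≤ n) (hl : l ∉ q.I) : incr y l = q.x l := by
  rw [incr, (hy.2.1 l h1 h2).2 hl, inv_mul_cancel_left]

lemma traj_incr_gt {q : Collection G S n} {y : ℕ → G} (hy : y ∈ trajSet a 1 q) {l : ℕ}
    (h : n < l) : incr y l = 1 := by
  have h1 : y l = y n := hy.2.2 l (by omega)
  have h2 : y (l-1) = y n := hy.2.2 (l-1) (by omega)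
  rw [incr, h1, h2, inv_mul_cancel]

lemma traj_eq_of_incr {y y' : ℕ → G} (h0 : y 0 = y' 0)
    (h : ∀ m, 1 ≤ m → incr y m = incr y' m) : y = y' := by
  funext l
  induction l with
  | zero => exact h0
  | succ t ih => rw [y_incr_succ y t, y_incr_succ y' t, ih, h (t+1) (by omega)]

lemma homSupp_quot_subset {J : Set S1} (hJsupp : homSupp a ⊆ J) {c d : G}
    (h : c = d ∨ ((c = a ∨ c = 1) ∧ (d = a ∨ d = 1))) : homSupp (c * d⁻¹) ⊆ J := by
  rcases h with rfl | ⟨hc, hd⟩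
  · rw [mul_inv_cancel, homSupp_one]; exact empty_subset J
  · rcases hc with rfl | rfl <;> rcases hd with rfl | rfl
    · rw [mul_inv_cancel, homSupp_one]; exact empty_subset J
    · rw [inv_one, mul_one]; exact hJsupp
    · rw [one_mul, homSupp_inv]; exact hJsupp
    · rw [inv_one, mul_one, homSupp_one]; exact empty_subset J

/-- Statement (5) of the theorem: preimage of ξ at time `i-1` is outside `J`. -/
lemma xi_notin_pred {J : Set S1} {ξ : S1} (hJsupp : homSupp a ⊆ J)
    {q : Collection G S n} (hq : GoodCore a J ξ q) {y : ℕ → G}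
    (hy : y ∈ trajSet a 1 q) {i : ℕ} (hi : i ∈ q.I) (h1 : 1 ≤ i) (h2 : i ≤ n) :
    (y (i-1))⁻¹ • ξ ∉ J := by
  intro hmem
  apply (hq y hy i hi).2
  rcases traj_incr_I hy h1 h2 hi with hc | hc
  · have hyi : y i = y (i-1) * a := by rw [y_incr y i, hc]
    rw [hyi, mul_inv_rev, mul_smul]
    exact mapsJ hJsupp (Or.inr (Or.inl rfl)) hmem
  · have hyi : y i = y (i-1) := by rw [y_incr y i, hc, mul_one]
    rwa [hyi]

/-- Statement (2) of the theorem: good collections have satisfactory trajectory sets. -/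
lemma satisfactory_of_goodCore (hh : ActsByHomeos G)
    {J : Set S1} {ξ : S1} (hJsupp : homSupp a ⊆ J) (hJclosed : IsClosed J)
    (hE : ¬ homSupp a ⊆ interior J)
    {q : Collection G S n} (hcore : GoodCore a J ξ q) : Satisfactory a 1 q := by
  classical
  intro y hy y' hy' hne hcontra
  -- set of differing increment times
  set Sd : Finset ℕ := (Finset.Icc 1 n).filter (fun m => incr y m ≠ incr y' m) with hSd
  have hSdne : Sd.Nonempty := by
    by_contra hemp
    rw [Finset.not_nonempty_iff_eq_empty] at hemp
    apply hne
    apply traj_eq_of_incr (by rw [hy.1, hy'.1])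
    intro m hm
    rcases le_or_gt m n with hmn | hmn
    · by_contra hd
      have : m ∈ Sd := Finset.mem_filter.mpr ⟨Finset.mem_Icc.mpr ⟨hm, hmn⟩, hd⟩
      rw [hemp] at this
      exact absurd this (Finset.notMem_empty m)
    · rw [traj_incr_gt hy hmn, traj_incr_gt hy' hmn]
  obtain ⟨i, hiSd, hmax⟩ : ∃ i, i ∈ Sd ∧ ∀ m ∈ Sd, m ≤ i :=
    ⟨Sd.max' hSdne, Sd.max'_mem hSdne, fun m hm => Sd.le_max' m hm⟩
  have hiIcc : 1 ≤ i ∧ i ≤ n := Finset.mem_Icc.mp (Finset.mem_filter.mp hiSd).1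
  have hidiff : incr y i ≠ incr y' i := (Finset.mem_filter.mp hiSd).2
  have hiI : i ∈ q.I := by
    by_contra hnot
    exact hidiff (by rw [traj_incr_not_I hy hiIcc.1 hiIcc.2 hnot,
      traj_incr_not_I hy' hiIcc.1 hiIcc.2 hnot])
  -- the difference element is trivial at time n, hence at time i
  have hdn : dft y y' n = 1 := by rw [dft, ← hcontra, mul_inv_cancel]
  have hstab : dft y y' n = dft y y' i := by
    have := dft_stab y y' i (n - i) ?_
    · rwa [Nat.add_sub_cancel' hiIcc.2] at this
    · intro m hm hm'
      by_contra hd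
      rcases le_or_gt m n with hmn | hmn
      · have : m ∈ Sd := Finset.mem_filter.mpr ⟨Finset.mem_Icc.mpr ⟨by omega, hmn⟩, hd⟩
        have := hmax m this
        omega
      · exact hd (by rw [traj_incr_gt hy hmn, traj_incr_gt hy' hmn])
  obtain ⟨t, rfl⟩ : ∃ t, i = t + 1 := ⟨i - 1, by omega⟩
  set δ : G := incr y' (t+1) * (incr y (t+1))⁻¹ with hδdef
  set g : G := y t with hgdef
  set w : G := g * δ * g⁻¹ with hwdef
  have hsplit : dft y y' (t+1) = dft y y' t * w := dft_succ y y' t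
  have hdt : dft y y' t = w⁻¹ := by
    have h1 : dft y y' t * w = 1 := by rw [← hsplit, ← hstab, hdn]
    exact eq_inv_of_mul_eq_one_left h1
  have hδa : δ = a ∨ δ = a⁻¹ := by
    rcases traj_incr_I hy hiIcc.1 hiIcc.2 hiI with h1 | h1 <;>
      rcases traj_incr_I hy' hiIcc.1 hiIcc.2 hiI with h2 | h2
    · exact absurd (h1.trans h2.symm) hidiff
    · right; rw [hδdef, h1, h2, one_mul]
    · left; rw [hδdef, h1, h2, inv_one, mul_one]
    · exact absurd (h1.trans h2.symm) hidiff
  have hδsupp : homSupp δ = homSupp a := by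
    rcases hδa with h | h
    · rw [h]
    · rw [h, homSupp_inv]
  -- moved set of dft y y' t is inside bigU
  set bigU : Set S1 :=
    ⋃ m ∈ Finset.Icc 1 t, ((fun z : S1 => y (m-1) • z) '' J ∩ (fun z : S1 => g • z) '' J)
    with hbigU
  have hH : ∀ m, 1 ≤ m → homSupp (incr y' m * (incr y m)⁻¹) ⊆ J := by
    intro m hm
    apply homSupp_quot_subset hJsupp
    rcases le_or_gt m n with hmn | hmn
    · by_cases hmI : m ∈ q.I
      · exact Or.inr ⟨traj_incr_I hy' hm hmn hmI, traj_incr_I hy hm hmn hmI⟩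
      · exact Or.inl (by rw [traj_incr_not_I hy' hm hmn hmI, traj_incr_not_I hy hm hmn hmI])
    · exact Or.inl (by rw [traj_incr_gt hy' hmn, traj_incr_gt hy hmn])
  have hmoved : ∀ x : S1, dft y y' t • x ≠ x → x ∈ bigU := by
    intro x hx
    obtain ⟨m, hm1, hm2, hm3, hm4⟩ := dft_moved (by rw [hy.1, hy'.1]) hH t x hx
    have hx2 : x ∈ (fun z : S1 => g • z) '' J := by
      have hwinv : w⁻¹ • x ≠ x := by rwa [← hdt]
      have hwx : x ∈ {x : S1 | w • x ≠ x} := by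
        rw [← movedSet_inv]; exact hwinv
      rw [hwdef, movedSet_conj] at hwx
      refine Set.image_mono ?_ hwx
      exact fun z hz => hJsupp (hδsupp ▸ subset_closure hz)
    exact Set.mem_biUnion (Finset.mem_Icc.mpr ⟨hm1, hm2⟩) ⟨hm4, hx2⟩
  have hbigU_closed : IsClosed bigU := by
    rw [hbigU]
    apply Set.Finite.isClosed_biUnion (Finset.Icc 1 t).finite_toSet
    intro m _
    exact (isClosed_smul_image hh _ hJclosed).inter (isClosed_smul_image hh _ hJclosed)
  have hbigU_sub : bigU ⊆ interior ((fun z : S1 => g • z) '' J) := by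
    rw [hbigU]
    intro z hz
    obtain ⟨m, hm, hz1, hz2⟩ := Set.mem_iUnion₂.mp hz
    rw [Finset.mem_Icc] at hm
    have hdom := (hcore y hy (t+1) hiI).1 (m-1) (by omega)
    rw [Nat.add_sub_cancel] at hdom
    rcases hdom with hdom | hdom
    · exact absurd hz1 (Set.disjoint_left.mp hdom hz2)
    · exact hdom hz1
  -- conclude
  apply hE
  have hchain : (fun z : S1 => g • z) '' homSupp a ⊆ (fun z : S1 => g • z) '' interior J := by
    have hsupp_eq : (fun z : S1 => g • z) '' homSupp a = homSupp (dft y y' t) := by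
      rw [hdt, homSupp_inv, hwdef, homSupp_conj hh g δ, hδsupp]
    rw [hsupp_eq, smul_image_interior hh]
    exact (closure_minimal hmoved hbigU_closed).trans hbigU_sub
  exact smul_image_subset_iff.mp hchain

end Collections

/-! ### Transfer to union collections -/

def mkTraj {S : Set G} {n : ℕ} (qb : Collection G S n) (w : ℕ → G) : ℕ → G :=
  fun l => Nat.rec (1:G)
    (fun t prev => if t + 1 ≤ n then
        prev * (if t + 1 ∈ qb.I then incr w (t+1) else qb.x (t+1))
      else prev) l

section Collections2

variable {S : Set G} {n : ℕ}

lemma mkTraj_zero (qb : Collection G S n) (w : ℕ → G) : mkTraj qb w 0 = 1 := rfl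

lemma mkTraj_succ (qb : Collection G S n) (w : ℕ → G) (t : ℕ) :
    mkTraj qb w (t+1) = if t + 1 ≤ n then
        mkTraj qb w t * (if t + 1 ∈ qb.I then incr w (t+1) else qb.x (t+1))
      else mkTraj qb w t := rfl

lemma mkTraj_mem (qb q' : Collection G S n) (hsub : qb.I ⊆ q'.I) {w : ℕ → G}
    (hw : w ∈ trajSet a 1 q') : mkTraj qb w ∈ trajSet a 1 qb := by
  refine ⟨rfl, ?_, ?_⟩
  · intro l h1 h2
    obtain ⟨t, rfl⟩ : ∃ t, l = t+1 := ⟨l-1, by omega⟩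
    constructor
    · intro hl
      rw [mkTraj_succ, if_pos h2, if_pos hl, Nat.add_sub_cancel]
      rcases traj_incr_I hw h1 h2 (hsub hl) with h | h
      · left; rw [h]
      · right; rw [h]
    · intro hl
      rw [mkTraj_succ, if_pos h2, if_neg hl, Nat.add_sub_cancel]
  · intro l hl
    induction l with
    | zero =>
      have h0 : n = 0 := by omega
      subst h0; rfl
    | succ t ih =>
      rcases eq_or_lt_of_le hl with h | h
      · rw [← h]
      · rw [mkTraj_succ, if_neg (by omega)]
        exact ih (by omega)

lemma mkTraj_incr (qb q' : Collection G S n) (hsub : qb.I ⊆ q'.I)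
    (hxab : ∀ l, 1 ≤ l → l ≤ n → l ∈ q'.I → l ∉ qb.I → qb.x l = a ∨ qb.x l = 1)
    (hxeq : ∀ l, 1 ≤ l → l ≤ n → l ∉ q'.I → qb.x l = q'.x l)
    {w : ℕ → G} (hw : w ∈ trajSet a 1 q') :
    ∀ m, 1 ≤ m → (incr (mkTraj qb w) m = incr w m) ∨
      (m ∈ q'.I ∧ m ∉ qb.I ∧ (incr (mkTraj qb w) m = a ∨ incr (mkTraj qb w) m = 1)
        ∧ (incr w m = a ∨ incr w m = 1)) := by
  intro m hm
  obtain ⟨t, rfl⟩ : ∃ t, m = t+1 := ⟨m-1, by omega⟩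
  rcases le_or_gt (t+1) n with h2 | h2
  · by_cases hIb : t+1 ∈ qb.I
    · left
      rw [incr_succ, mkTraj_succ, if_pos h2, if_pos hIb, inv_mul_cancel_left]
    · have hmkincr : incr (mkTraj qb w) (t+1) = qb.x (t+1) := by
        rw [incr_succ, mkTraj_succ, if_pos h2, if_neg hIb, inv_mul_cancel_left]
      by_cases hI' : t+1 ∈ q'.I
      · right
        exact ⟨hI', hIb, by rw [hmkincr]; exact hxab _ (by omega) h2 hI' hIb,
          traj_incr_I hw (by omega) h2 hI'⟩
      · left
        rw [hmkincr, hxeq _ (by omega) h2 hI', traj_incr_not_I hw (by omega) h2 hI']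
  · left
    have hmk : mkTraj qb w ∈ trajSet a 1 qb := mkTraj_mem qb q' hsub hw
    rw [traj_incr_gt hmk h2, traj_incr_gt hw h2]

lemma transfer_beta {J : Set S1} {ξ : S1} (hJsupp : homSupp a ⊆ J)
    {q' qb : Collection G S n} (hsub : qb.I ⊆ q'.I)
    (hxab : ∀ l, 1 ≤ l → l ≤ n → l ∈ q'.I → l ∉ qb.I → qb.x l = a ∨ qb.x l = 1)
    (hxeq : ∀ l, 1 ≤ l → l ≤ n → l ∉ q'.I → qb.x l = q'.x l)
    (hcb : GoodCore a J ξ qb)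
    {w : ℕ → G} (hw : w ∈ trajSet a 1 q') {i : ℕ} (hi : i ∈ qb.I)
    (IH : ∀ m, m < i → m ∈ q'.I → (w m)⁻¹ • ξ ∉ J) :
    (w i)⁻¹ • ξ ∉ J := by
  intro hmem
  have hyb : mkTraj qb w ∈ trajSet a 1 qb := mkTraj_mem qb q' hsub hw
  set yb := mkTraj qb w with hybdef
  apply (hcb yb hyb i hi).2
  have hH : ∀ m, 1 ≤ m → homSupp (incr yb m * (incr w m)⁻¹) ⊆ J := by
    intro m hm
    apply homSupp_quot_subset hJsupp
    rcases mkTraj_incr qb q' hsub hxab hxeq hw m hm with he | ⟨_, _, hb, hw'⟩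
    · exact Or.inl he
    · exact Or.inr ⟨hb, hw'⟩
  have hfix : dft w yb i • ξ = ξ := by
    by_contra hfx
    obtain ⟨m, hm1, hm2, hm3, hm4⟩ := dft_moved (hw.1.trans rfl.symm ▸ rfl) hH i ξ hfx
    rcases mkTraj_incr qb q' hsub hxab hxeq hw m hm1 with he | ⟨hmI', hmIb, _, hwa⟩
    · exact hm3 he.symm
    · have hmi : m < i := by
        rcases eq_or_lt_of_le hm2 with h | h
        · exact absurd (h ▸ hi) hmIb
        · exact h
      apply IH m hmi hmI'
      rw [mem_smul_image] at hm4
      rcases hwa with hc | hc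
      · have hyi : w m = w (m-1) * a := by rw [y_incr w m, hc]
        rw [hyi, mul_inv_rev, mul_smul]
        exact mapsJ hJsupp (Or.inr (Or.inl rfl)) hm4
      · have hyi : w m = w (m-1) := by rw [y_incr w m, hc, mul_one]
        rw [hyi]; exact hm4
  have happ : yb i = dft w yb i * w i := dft_apply w yb i
  rw [happ, mul_inv_rev, mul_smul]
  have h2 : (dft w yb i)⁻¹ • ξ = ξ := by
    rw [inv_smul_eq_iff, hfix]
  rw [h2]
  exact hmem

lemma transfer_alpha (hh : ActsByHomeos G) {J : Set S1} {ξ : S1} (hJsupp : homSupp a ⊆ J)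
    {q' qb : Collection G S n} (hsub : qb.I ⊆ q'.I)
    (hxab : ∀ l, 1 ≤ l → l ≤ n → l ∈ q'.I → l ∉ qb.I → qb.x l = a ∨ qb.x l = 1)
    (hxeq : ∀ l, 1 ≤ l → l ≤ n → l ∉ q'.I → qb.x l = q'.x l)
    (hcb : GoodCore a J ξ qb)
    {w : ℕ → G} (hw : w ∈ trajSet a 1 q') {i : ℕ} (hi : i ∈ qb.I)
    {l : ℕ} (hl : l < i - 1) :
    Dominates ((fun z : S1 => w (i-1) • z) '' J) ((fun z : S1 => w l • z) '' J) := by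
  have hyb : mkTraj qb w ∈ trajSet a 1 qb := mkTraj_mem qb q' hsub hw
  set yb := mkTraj qb w with hybdef
  have hdomb := (hcb yb hyb i hi).1
  have hHδ : ∀ m, 1 ≤ m → homSupp (incr w m * (incr yb m)⁻¹) ⊆ J := by
    intro m hm
    apply homSupp_quot_subset hJsupp
    rcases mkTraj_incr qb q' hsub hxab hxeq hw m hm with he | ⟨_, _, hb, hw'⟩
    · exact Or.inl he.symm
    · exact Or.inr ⟨hw', hb⟩
  have hQ : ∀ s, l + s ≤ i - 1 →
      Dominates ((fun z : S1 => yb (i-1) • z) '' J)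
        ((fun z : S1 => ((dft yb w (l+s))⁻¹ * dft yb w l) • z) ''
          ((fun z : S1 => yb l • z) '' J)) := by
    intro s
    induction s with
    | zero =>
      intro _
      rw [Nat.add_zero, inv_mul_cancel, smul_image_one]
      exact hdomb l hl
    | succ s ih =>
      intro hs
      have hs' : l + s ≤ i - 1 := by omega
      have hstep := dft_succ yb w (l+s)
      set u : G := yb (l+s) * (incr w (l+s+1) * (incr yb (l+s+1))⁻¹) * (yb (l+s))⁻¹ with hu
      have hfac : (dft yb w (l+s+1))⁻¹ * dft yb w l
          = u⁻¹ * ((dft yb w (l+s))⁻¹ * dft yb w l) := by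
        rw [hstep]; group
      rw [show l + (s+1) = (l+s)+1 from rfl, hfac, ← smul_image_comp]
      apply dominates_u (C := (fun z : S1 => yb (l+s) • z) '' J)
      · intro x hx
        have hx' : x ∈ {x : S1 | u • x ≠ x} := by
          rw [← movedSet_inv]; exact hx
        rw [hu, movedSet_conj] at hx'
        refine Set.image_mono ?_ hx'
        exact fun z hz => hHδ (l+s+1) (by omega) (subset_closure hz)
      · intro x hx
        have hx' : u⁻¹ • x ∈ homSupp u⁻¹ := smul_mem_supp_of_moved hx
        rw [homSupp_inv, hu, homSupp_conj hh] at hx'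
        refine Set.image_mono ?_ hx'
        exact hHδ (l+s+1) (by omega)
      · exact hdomb (l+s) (by omega)
      · exact ih hs'
  have hfin := hQ ((i-1) - l) (by omega)
  rw [Nat.add_sub_cancel' (by omega : l ≤ i - 1)] at hfin
  have hmain := dominates_smul hh (dft yb w (i-1)) hfin
  rw [smul_image_comp, ← dft_apply, smul_image_comp, smul_image_comp,
    mul_inv_cancel_left, ← dft_apply] at hmain
  exact hmain

end Collections2

def unionColl {S : Set G} {n : ℕ} (q₁ q₂ : Collection G S n) : Collection G S n where
  I := q₁.I ∪ q₂.I
  hI := fun i hi => by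
    rcases Finset.mem_union.mp hi with h | h
    exacts [q₁.hI i h, q₂.hI i h]
  x := fun l => if l = 0 ∨ n < l ∨ l ∈ q₁.I ∪ q₂.I then 1 else q₁.x l
  hx_mem := fun l h1 h2 hl => by
    show (if l = 0 ∨ n < l ∨ l ∈ q₁.I ∪ q₂.I then 1 else q₁.x l) ∈ S
    rw [if_neg (by push_neg; exact ⟨by omega, by omega, hl⟩)]
    exact q₁.hx_mem l h1 h2 (fun hc => hl (Finset.mem_union_left _ hc))
  hx_canon := fun l hl => if_pos hl

section Collections3

variable {S : Set G} {n : ℕ}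

lemma goodCore_union (hh : ActsByHomeos G) {J : Set S1} {ξ : S1}
    (hJsupp : homSupp a ⊆ J) {q₁ q₂ : Collection G S n}
    (hc₁ : GoodCore a J ξ q₁) (hc₂ : GoodCore a J ξ q₂)
    {y : ℕ → G} (hy₁ : y ∈ trajSet a 1 q₁) (hy₂ : y ∈ trajSet a 1 q₂) :
    GoodCore a J ξ (unionColl q₁ q₂) := by
  have hsub₁ : q₁.I ⊆ (unionColl q₁ q₂).I := Finset.subset_union_left
  have hsub₂ : q₂.I ⊆ (unionColl q₁ q₂).I := Finset.subset_union_right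
  have hxab₁ : ∀ l, 1 ≤ l → l ≤ n → l ∈ (unionColl q₁ q₂).I → l ∉ q₁.I →
      q₁.x l = a ∨ q₁.x l = 1 := by
    intro l h1 h2 hl hnl
    have hl₂ : l ∈ q₂.I := by
      rcases Finset.mem_union.mp hl with h | h
      · exact absurd h hnl
      · exact h
    rw [← traj_incr_not_I hy₁ h1 h2 hnl]
    exact traj_incr_I hy₂ h1 h2 hl₂
  have hxab₂ : ∀ l, 1 ≤ l → l ≤ n → l ∈ (unionColl q₁ q₂).I → l ∉ q₂.I →
      q₂.x l = a ∨ q₂.x l = 1 := by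
    intro l h1 h2 hl hnl
    have hl₁ : l ∈ q₁.I := by
      rcases Finset.mem_union.mp hl with h | h
      · exact h
      · exact absurd h hnl
    rw [← traj_incr_not_I hy₂ h1 h2 hnl]
    exact traj_incr_I hy₁ h1 h2 hl₁
  have hxeq₁ : ∀ l, 1 ≤ l → l ≤ n → l ∉ (unionColl q₁ q₂).I →
      q₁.x l = (unionColl q₁ q₂).x l := by
    intro l h1 h2 hl
    show q₁.x l = if l = 0 ∨ n < l ∨ l ∈ q₁.I ∪ q₂.I then 1 else q₁.x l
    rw [if_neg (by push_neg; exact ⟨by omega, by omega, hl⟩)]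
  have hxeq₂ : ∀ l, 1 ≤ l → l ≤ n → l ∉ (unionColl q₁ q₂).I →
      q₂.x l = (unionColl q₁ q₂).x l := by
    intro l h1 h2 hl
    have hl₁ : l ∉ q₁.I := fun hc => hl (Finset.mem_union_left _ hc)
    have hl₂ : l ∉ q₂.I := fun hc => hl (Finset.mem_union_right _ hc)
    show q₂.x l = if l = 0 ∨ n < l ∨ l ∈ q₁.I ∪ q₂.I then 1 else q₁.x l
    rw [if_neg (by push_neg; exact ⟨by omega, by omega, hl⟩),
      ← traj_incr_not_I hy₂ h1 h2 hl₂, traj_incr_not_I hy₁ h1 h2 hl₁]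
  have hbeta : ∀ i, ∀ w ∈ trajSet a 1 (unionColl q₁ q₂), i ∈ (unionColl q₁ q₂).I →
      (w i)⁻¹ • ξ ∉ J := by
    intro i
    induction i using Nat.strong_induction_on with
    | _ i IH =>
      intro w hw hi
      rcases Finset.mem_union.mp hi with hib | hib
      · exact transfer_beta hJsupp hsub₁ hxab₁ hxeq₁ hc₁ hw hib
          (fun m hm hm' => IH m hm w hw hm')
      · exact transfer_beta hJsupp hsub₂ hxab₂ hxeq₂ hc₂ hw hib
          (fun m hm hm' => IH m hm w hw hm')
  intro w hw i hi
  refine ⟨?_, hbeta i w hw hi⟩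
  intro l hl
  rcases Finset.mem_union.mp hi with hib | hib
  · exact transfer_alpha hh hJsupp hsub₁ hxab₁ hxeq₁ hc₁ hw hib hl
  · exact transfer_alpha hh hJsupp hsub₂ hxab₂ hxeq₂ hc₂ hw hib hl

lemma collection_eq_of_same {q₁ q₂ : Collection G S n} (hI : q₁.I = q₂.I)
    {y : ℕ → G} (hy₁ : y ∈ trajSet a 1 q₁) (hy₂ : y ∈ trajSet a 1 q₂) : q₁ = q₂ := by
  obtain ⟨I₁, hI₁, x₁, hm₁, hcan₁⟩ := q₁
  obtain ⟨I₂, hI₂, x₂, hm₂, hcan₂⟩ := q₂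
  simp only at hI
  subst hI
  have hx : x₁ = x₂ := by
    funext l
    by_cases h : l = 0 ∨ n < l ∨ l ∈ I₁
    · rw [hcan₁ l h, hcan₂ l h]
    · push_neg at h
      exact (traj_incr_not_I hy₁ (by omega) (by omega) h.2.2).symm.trans
        (traj_incr_not_I hy₂ (by omega) (by omega) h.2.2)
  subst hx
  rfl

lemma collections_eq (hh : ActsByHomeos G) {J : Set S1} {ξ : S1}
    (hJsupp : homSupp a ⊆ J) {q₁ q₂ : Collection G S n}
    (hg₁ : IsXiGood a J ξ q₁) (hg₂ : IsXiGood a J ξ q₂)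
    {y : ℕ → G} (hy₁ : y ∈ trajSet a 1 q₁) (hy₂ : y ∈ trajSet a 1 q₂) : q₁ = q₂ := by
  have hmaxarg : ∀ (p r : Collection G S n), ∀ l ∉ (unionColl p r).I,
      (unionColl p r).x l = p.x l := by
    intro p r l hl
    show (if l = 0 ∨ n < l ∨ l ∈ p.I ∪ r.I then 1 else p.x l) = p.x l
    by_cases hc : l = 0 ∨ n < l ∨ l ∈ p.I ∪ r.I
    · rw [if_pos hc]
      refine (p.hx_canon l ?_).symm
      rcases hc with h | h | h
      · exact Or.inl h
      · exact Or.inr (Or.inl h)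
      · exact absurd h hl
    · rw [if_neg hc]
  by_cases h21 : q₂.I ⊆ q₁.I
  · by_cases h12 : q₁.I ⊆ q₂.I
    · exact collection_eq_of_same (Finset.Subset.antisymm h12 h21) hy₁ hy₂
    · exfalso
      apply hg₂.2 (unionColl q₂ q₁) ?_ (hmaxarg q₂ q₁)
        (goodCore_union hh hJsupp hg₂.1 hg₁.1 hy₂ hy₁)
      · exact Finset.ssubset_iff_subset_ne.mpr ⟨Finset.subset_union_left,
          fun he => h12 (fun x hx => by rw [he]; exact Finset.mem_union_right _ hx)⟩
  · exfalso
    apply hg₁.2 (unionColl q₁ q₂) ?_ (hmaxarg q₁ q₂)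
      (goodCore_union hh hJsupp hg₁.1 hg₂.1 hy₁ hy₂)
    exact Finset.ssubset_iff_subset_ne.mpr ⟨Finset.subset_union_left,
      fun he => h21 (fun x hx => by rw [he]; exact Finset.mem_union_right _ hx)⟩

lemma cyl_disjoint (hh : ActsByHomeos G) {J : Set S1} {ξ : S1}
    (hJsupp : homSupp a ⊆ J) (hn : 1 ≤ n) {q₁ q₂ : Collection G S n}
    (hg₁ : IsXiGood a J ξ q₁) (hg₂ : IsXiGood a J ξ q₂) (hne : q₁ ≠ q₂)
    {y₁ y₂ : ℕ → G} (hy₁ : y₁ ∈ trajSet a 1 q₁) (hy₂ : y₂ ∈ trajSet a 1 q₂) :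
    Disjoint (cylOf n y₁) (cylOf n y₂) := by
  rw [Set.disjoint_left]
  intro w hw1 hw2
  apply hne
  have heq : y₁ = y₂ := by
    funext k
    rcases Nat.eq_zero_or_pos k with rfl | hk
    · rw [hy₁.1, hy₂.1]
    · rcases le_or_gt k n with hkn | hkn
      · rw [← hw1 k hk hkn, hw2 k hk hkn]
      · rw [hy₁.2.2 k (by omega), hy₂.2.2 k (by omega), ← hw1 n hn le_rfl, hw2 n hn le_rfl]
  subst heq
  exact collections_eq hh hJsupp hg₁ hg₂ hy₁ hy₂

end Collections3

end XGAux

/-- If the sets `A_{n,ξ}` consist of `ξ`-good collections, then conditions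
(2), (3) and (5) of the conditional entropy criterion hold: each `T^{a,e}(q)` is satisfactory,
cylinders from distinct collections are disjoint, and `y_{i_r−1}⁻¹(ξ) ∉ J`. -/
theorem xi_good_implies_entropy_conditions
    {G : Type} [Group G] [Countable G] [MulAction G S1]
    [MeasurableSpace G] [MeasurableSingletonClass G]
    (hhomeo : ActsByHomeos G) (hfaith : FaithfulAct G) (horient : ∀ g : G, OrientPres g)
    (hmin : MinimalAct G) (hprox : ProximalAct G)
    (μ : PMF G) (hnd : Nondeg μ) (hent : FiniteShannonEntropy μ)
    (ν : Measure S1) (hν : IsUniqueStationaryS1 μ ν)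
    (a : G) (ha : a ≠ 1) (hsupp_int : (interior (homSupp a)).Nonempty)
    (hcompl_int : (interior ((homSupp a)ᶜ)).Nonempty)
    (J : Set S1) (hJarc : IsClosedArc J) (hJsupp : homSupp a ⊆ J)
    (hJmin : ∀ J' : Set S1, IsClosedArc J' → homSupp a ⊆ J' → J ⊆ J')
    (p : ℝ) (hp : 0 < p)
    (Ξ : ℕ → Set S1) (hΞ : ∀ n : ℕ, 1 ≤ n → ENNReal.ofReal p ≤ ν (Ξ n))
    (A : (n : ℕ) → S1 → Set (Collection G μ.support n))
    (hgood : ∀ n : ℕ, 1 ≤ n → ∀ᵐ ξ ∂ν, ξ ∈ Ξ n → ∀ q ∈ A n ξ, IsXiGood a J ξ q) :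
    ∀ n : ℕ, 1 ≤ n → ∀ᵐ ξ ∂ν, ξ ∈ Ξ n →
      (∀ q ∈ A n ξ, Satisfactory a 1 q) ∧
      (∀ q₁ ∈ A n ξ, ∀ q₂ ∈ A n ξ, q₁ ≠ q₂ →
        ∀ y₁ ∈ trajSet a 1 q₁, ∀ y₂ ∈ trajSet a 1 q₂,
          Disjoint (cylOf n y₁) (cylOf n y₂)) ∧
      (∀ q ∈ A n ξ, ∀ y ∈ trajSet a 1 q, ∀ i ∈ q.I, (y (i - 1))⁻¹ • ξ ∉ J) := by
  intro n hn
  filter_upwards [hgood n hn] with ξ hgξ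
  intro hξ
  have hG := hgξ hξ
  have hmoveda : ∃ x : S1, a • x ≠ x := by
    by_contra hc
    push_neg at hc
    exact ha (hfaith a hc)
  have hne : (homSupp a).Nonempty := by
    obtain ⟨x, hx⟩ := hmoveda
    exact ⟨x, subset_closure hx⟩
  have hJclosed : IsClosed J := by
    obtain ⟨α, β, -, -, hJeq⟩ := hJarc
    rw [hJeq]
    exact (isCompact_Icc.image XGAux.continuous_toS1).isClosed
  have hE : ¬ homSupp a ⊆ interior J :=
    XGAux.not_supp_subset_interior hne hJarc hJsupp hJmin hcompl_int
  refine ⟨?_, ?_, ?_⟩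
  · intro q hq
    exact XGAux.satisfactory_of_goodCore hhomeo hJsupp hJclosed hE (hG q hq).1
  · intro q₁ hq₁ q₂ hq₂ hne12 y₁ hy₁ y₂ hy₂
    exact XGAux.cyl_disjoint hhomeo hJsupp hn (hG q₁ hq₁) (hG q₂ hq₂) hne12 hy₁ hy₂
  · intro q hq y hy i hi
    have hbounds := q.hI i hi
    exact XGAux.xi_notin_pred hJsupp (hG q hq).1 hy hi hbounds.1 hbounds.2

end
end

section
/- Let G ≤ Homeo₊(S¹) be countable with minimal, proximal and topologically nonfree action, and let μ be a nondegenerate probability measure on G with μ(e_G) > 0. Let ν, ν̄ be the unique μ- and μ̄-stationary measures on S¹. Suppose I ⊂ S¹ is a closed interval with ν(I) < 1/2, a ∈ supp(μ)∖{e_G} satisfies supp(a) ⊆ I with J the smallest closed interval containing supp(a), and c ∈ (0,1) is such that ν̄(J) < c/8 and 𝔼[Z^J_{n,1}] ≥ cn for all sufficiently large n. For n ≥ 1 let Wₙ count the times 1 ≤ k ≤ n such that w_k(J) dominates w_j(J) for all 0 ≤ j ≤ k−1, w_k⁻¹(ξ(w)) ∉ J, and the increment g_{k+1} ∈ {a,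 e_G}. Then there exists 0 < c′ < 1 such that 𝔼[Wₙ] ≥ c′ n for all sufficiently large n. -/
open MeasureTheory Filter Topology Set

noncomputable section

/-! ### Auxiliary development for Statement 15 -/

set_option linter.unusedSectionVars false

namespace RW15
open MeasureTheory

variable {G : Type} [Group G] [Countable G] [MeasurableSpace G] [MeasurableSingletonClass G]

lemma measG (s : Set G) : MeasurableSet s := s.to_countable.measurableSet

/-- Cylinder set: trajectories agreeing with `t` up to time `k`. -/
def cyl (k : ℕ) (t : ℕ → G) : Set (ℕ → G) := {w | ∀ j ≤ k, w j = t j}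

lemma measurableSet_cyl (k : ℕ) (t : ℕ → G) : MeasurableSet (cyl k t) := by
  have h : cyl k t = ⋂ j, ⋂ (_ : j ≤ k), (fun w : ℕ → G => w j) ⁻¹' {t j} := by
    ext w; simp [cyl]
  rw [h]
  exact MeasurableSet.iInter fun j => MeasurableSet.iInter fun _ =>
    measurable_pi_apply j (measG _)

/-- Extend a finite tuple to `ℕ → G` by `1`. -/
def pad (k : ℕ) (t : Fin (k+1) → G) : ℕ → G :=
  fun j => if h : j < k + 1 then t ⟨j, h⟩ else 1

lemma pad_le {k : ℕ} (t : Fin (k+1) → G) {j : ℕ} (hj : j ≤ k) :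
    pad k t j = t ⟨j, Nat.lt_succ_of_le hj⟩ := by
  simp [pad, Nat.lt_succ_of_le hj]

/-- The collection of all cylinders. -/
def cylSys (G : Type) [Group G] : Set (Set (ℕ → G)) := {s | ∃ k t, s = cyl k t}

lemma isPiSystem_cylSys : IsPiSystem (cylSys G) := by
  have key : ∀ (k : ℕ) (t : ℕ → G) (m : ℕ) (z : ℕ → G), k ≤ m →
      (cyl (G := G) k t ∩ cyl m z).Nonempty → cyl (G := G) k t ∩ cyl m z = cyl m z := by
    rintro k t m z hkm ⟨w, hw1, hw2⟩
    refine Set.Subset.antisymm Set.inter_subset_right fun v hv => ⟨fun j hj => ?_, hv⟩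
    rw [hv j (hj.trans hkm), ← hw2 j (hj.trans hkm), hw1 j hj]
  rintro s ⟨k, t, rfl⟩ u ⟨m, z, rfl⟩ hne
  rcases le_total k m with h | h
  · rw [key k t m z h hne]; exact ⟨m, z, rfl⟩
  · rw [Set.inter_comm, key m z k t h (by rwa [Set.inter_comm] at hne)]; exact ⟨k, t, rfl⟩

lemma generateFrom_cylSys :
    (inferInstance : MeasurableSpace (ℕ → G)) = .generateFrom (cylSys G) := by
  refine le_antisymm ?_ (MeasurableSpace.generateFrom_le ?_)
  · have hcoord : ∀ i : ℕ, @Measurable (ℕ → G) G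
        (MeasurableSpace.generateFrom (cylSys G)) _ (fun w => w i) := by
      intro i
      refine @measurable_to_countable' G (ℕ → G) _ _
        (MeasurableSpace.generateFrom (cylSys G)) (fun w => w i) fun g => ?_
      have hset : ((fun w : ℕ → G => w i) ⁻¹' {g}) =
        ⋃ (t : Fin (i+1) → G), ⋃ (_ : t ⟨i, Nat.lt_succ_self i⟩ = g), cyl i (pad i t) := by
        ext w
        simp only [Set.mem_preimage, Set.mem_singleton_iff, Set.mem_iUnion]
        constructor
        · intro hw
          refine ⟨fun j => w j, by simpa using hw, fun j hj => ?_⟩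
          rw [pad_le _ hj]
        · rintro ⟨t, hg, hw⟩
          rw [hw i le_rfl, pad_le _ le_rfl]
          exact hg
      rw [hset]
      exact MeasurableSet.iUnion fun t => MeasurableSet.iUnion fun _ =>
        MeasurableSpace.measurableSet_generateFrom ⟨i, pad i t, rfl⟩
    have hid : @Measurable (ℕ → G) (ℕ → G) (MeasurableSpace.generateFrom (cylSys G))
        MeasurableSpace.pi id :=
      (@measurable_pi_iff (ℕ → G) ℕ (fun _ => G)
        (MeasurableSpace.generateFrom (cylSys G)) _ id).mpr hcoord
    exact fun s hs => hid hs
  · rintro s ⟨k, t, rfl⟩; exact measurableSet_cyl k t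

/-! ### The random walk measure on cylinders -/

lemma P_cyl {μ : PMF G} {P : Measure (ℕ → G)} (hP : IsRWMeasure μ P)
    {y : ℕ → G} (hy : y 0 = 1) (n : ℕ) :
    P (cyl n y) = ∏ k ∈ Finset.range n, μ ((y k)⁻¹ * y (k + 1)) := hP.2 n y hy

lemma P_zero_one {μ : PMF G} {P : Measure (ℕ → G)} (hP : IsRWMeasure μ P) :
    P {w : ℕ → G | w 0 = 1} = 1 := by
  have h := hP.2 0 (fun _ => 1) rfl
  simp only [Finset.range_zero, Finset.prod_empty] at h
  rw [← h]
  congr 1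
  ext w
  simp [Nat.le_zero]

lemma P_zero_ne {μ : PMF G} {P : Measure (ℕ → G)} (hP : IsRWMeasure μ P) :
    P {w : ℕ → G | w 0 ≠ 1} = 0 := by
  haveI := hP.1
  have hm : MeasurableSet ((fun w : ℕ → G => w 0) ⁻¹' {1}) :=
    measurable_pi_apply 0 (measG {1})
  have he : {w : ℕ → G | w 0 ≠ 1} = ((fun w : ℕ → G => w 0) ⁻¹' {1})ᶜ := rfl
  rw [he, prob_compl_eq_zero_iff hm]
  exact P_zero_one hP

lemma P_cyl_ne {μ : PMF G} {P : Measure (ℕ → G)} (hP : IsRWMeasure μ P)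
    {t : ℕ → G} (ht : t 0 ≠ 1) (k : ℕ) : P (cyl k t) = 0 :=
  measure_mono_null (fun w hw => show w 0 ≠ 1 by rw [hw 0 (Nat.zero_le _)]; exact ht)
    (P_zero_ne hP)

lemma P_inter_one {μ : PMF G} {P : Measure (ℕ → G)} (hP : IsRWMeasure μ P)
    (A : Set (ℕ → G)) : P (A ∩ {w | w 0 = 1}) = P A := by
  refine le_antisymm (measure_mono Set.inter_subset_left) ?_
  calc P A ≤ P ((A ∩ {w | w 0 = 1}) ∪ {w : ℕ → G | w 0 ≠ 1}) := by
        refine measure_mono fun w hw => ?_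
        by_cases h : w 0 = 1
        · exact Or.inl ⟨hw, h⟩
        · exact Or.inr h
    _ ≤ P (A ∩ {w | w 0 = 1}) + P {w : ℕ → G | w 0 ≠ 1} := measure_union_le _ _
    _ = P (A ∩ {w | w 0 = 1}) := by rw [P_zero_ne hP, add_zero]

/-! ### The shift map and independence -/

/-- The translated shift `(shiftW k w) m = w_k⁻¹ w_{k+m}`. -/
def shiftW (k : ℕ) (w : ℕ → G) : ℕ → G := fun m => (w k)⁻¹ * w (k + m)

lemma measurable_shiftW (k : ℕ) : Measurable (shiftW (G := G) k) := by
  refine measurable_pi_lambda _ fun m => measurable_to_countable' fun g => ?_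
  have hset : ((fun w : ℕ → G => shiftW k w m) ⁻¹' {g}) =
      ⋃ h : G, ((fun w : ℕ → G => w k) ⁻¹' {h}) ∩ ((fun w : ℕ → G => w (k + m)) ⁻¹' {h * g}) := by
    ext w
    simp only [Set.mem_preimage, Set.mem_singleton_iff, Set.mem_iUnion, Set.mem_inter_iff,
      shiftW]
    constructor
    · intro hw
      exact ⟨w k, rfl, (inv_mul_eq_iff_eq_mul.mp hw)⟩
    · rintro ⟨h, h1, h2⟩
      rw [h1, h2]
      exact inv_mul_cancel_left h g
  rw [hset]
  exact MeasurableSet.iUnion fun h =>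
    ((measurable_pi_apply k (measG _)).inter (measurable_pi_apply (k + m) (measG _)))

lemma shiftW_cyl_inter (k m : ℕ) (t z : ℕ → G) (hz : z 0 = 1) :
    cyl k t ∩ shiftW k ⁻¹' cyl m z =
      cyl (k + m) (fun j => if j ≤ k then t j else t k * z (j - k)) := by
  ext w
  constructor
  · rintro ⟨h1, h2⟩ j hj
    by_cases hjk : j ≤ k
    · simpa only [if_pos hjk] using h1 j hjk
    · push_neg at hjk
      have hj2 : j - k ≤ m := by omega
      have hstep := h2 (j - k) hj2
      have hkj : k + (j - k) = j := by omega
      rw [show shiftW k w (j - k) = (w k)⁻¹ * w (k + (j - k)) from rfl, hkj] at hstep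
      simp only [if_neg (by omega : ¬ j ≤ k)]
      calc w j = w k * z (j - k) := inv_mul_eq_iff_eq_mul.mp hstep
        _ = t k * z (j - k) := by rw [h1 k le_rfl]
  · intro h
    have hwk : w k = t k := by
      have := h k (by omega)
      simpa only [if_pos (le_refl k)] using this
    refine ⟨fun j hj => ?_, fun j hj => ?_⟩
    · have := h j (by omega)
      simpa only [if_pos hj] using this
    · show (w k)⁻¹ * w (k + j) = z j
      rcases Nat.eq_zero_or_pos j with rfl | hj0
      · rw [Nat.add_zero, inv_mul_cancel, hz]
      · have hkj : ¬ (k + j ≤ k) := by omega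
        have hh := h (k + j) (by omega)
        simp only [if_neg hkj, show k + j - k = j by omega] at hh
        rw [hh, hwk]
        group

lemma indep_cyl {μ : PMF G} {P : Measure (ℕ → G)} (hP : IsRWMeasure μ P)
    (k : ℕ) (t : ℕ → G) {D : Set (ℕ → G)} (hD : MeasurableSet D) :
    P (cyl k t ∩ shiftW k ⁻¹' D) = P (cyl k t) * P D := by
  haveI := hP.1
  by_cases ht : t 0 = 1
  swap
  · have h1 : P (cyl k t) = 0 := P_cyl_ne hP ht k
    rw [h1, zero_mul]
    exact measure_mono_null Set.inter_subset_left h1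
  set m1 : Measure (ℕ → G) := Measure.map (shiftW k) (P.restrict (cyl k t)) with hm1def
  have hm1 : ∀ {D : Set (ℕ → G)}, MeasurableSet D → m1 D = P (cyl k t ∩ shiftW k ⁻¹' D) := by
    intro D hD
    rw [hm1def, Measure.map_apply (measurable_shiftW k) hD,
      Measure.restrict_apply (measurable_shiftW k hD), Set.inter_comm]
  haveI : IsFiniteMeasure m1 := ⟨by
    rw [hm1 MeasurableSet.univ]
    exact lt_of_le_of_lt (measure_mono Set.inter_subset_left) (measure_lt_top P _)⟩
  have hext : m1 = P (cyl k t) • P := by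
    refine ext_of_generate_finite _ generateFrom_cylSys isPiSystem_cylSys ?_ ?_
    · rintro s ⟨m, z, rfl⟩
      rw [hm1 (measurableSet_cyl m z), Measure.smul_apply, smul_eq_mul]
      by_cases hz : z 0 = 1
      · rw [shiftW_cyl_inter k m t z hz,
          P_cyl hP (y := fun j => if j ≤ k then t j else t k * z (j - k)) (show (fun j => if j ≤ k then t j else t k * z (j - k)) 0 = 1 by
            simp only [if_pos (Nat.zero_le k)]; exact ht) (k + m),
          P_cyl hP ht k, P_cyl hP hz m, Finset.prod_range_add]
        congr 1
        · refine Finset.prod_congr rfl fun i hi => ?_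
          have h1 : i ≤ k := le_of_lt (Finset.mem_range.mp hi)
          have h2 : i + 1 ≤ k := Finset.mem_range.mp hi
          simp only [if_pos h1, if_pos h2]
        · refine Finset.prod_congr rfl fun i _ => ?_
          have hg1 : (if k + i ≤ k then t (k + i) else t k * z (k + i - k)) = t k * z i := by
            rcases Nat.eq_zero_or_pos i with rfl | hi0
            · simp [hz]
            · rw [if_neg (by omega), show k + i - k = i by omega]
          have hg2 : (if k + i + 1 ≤ k then t (k + i + 1) else t k * z (k + i + 1 - k))
              = t k * z (i + 1) := by
            rw [if_neg (by omega), show k + i + 1 - k = i + 1 by omega]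
          rw [hg1, hg2]
          congr 1
          group
      · have h2 : P (cyl m z) = 0 := P_cyl_ne hP hz m
        rw [h2, mul_zero]
        refine measure_mono_null (fun w hw => ?_) (measure_empty (μ := P))
        exfalso
        obtain ⟨-, h2'⟩ := hw
        have h3 := h2' 0 (Nat.zero_le m)
        rw [show shiftW k w 0 = (w k)⁻¹ * w (k + 0) from rfl, Nat.add_zero,
          inv_mul_cancel] at h3
        exact hz h3.symm
    · rw [hm1 MeasurableSet.univ]
      simp [measure_univ]
  rw [← hm1 hD, hext, Measure.smul_apply, smul_eq_mul]

lemma pad_mem_cyl {k : ℕ} (w : ℕ → G) :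
    w ∈ cyl k (pad k (fun j : Fin (k+1) => w j)) := by
  intro j hj
  rw [pad_le _ hj]

lemma indep_dep {μ : PMF G} {P : Measure (ℕ → G)} (hP : IsRWMeasure μ P)
    (k : ℕ) (A : Set (ℕ → G))
    (hA : ∀ w w' : ℕ → G, (∀ j ≤ k, w j = w' j) → w ∈ A → w' ∈ A)
    {D : Set (ℕ → G)} (hD : MeasurableSet D) :
    P (A ∩ shiftW k ⁻¹' D) = P A * P D := by
  classical
  haveI := hP.1
  set T := {t : Fin (k+1) → G // pad k t ∈ A ∧ t 0 = 1} with hT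
  have hagree : ∀ (t : Fin (k+1) → G) (w : ℕ → G), w ∈ cyl k (pad k t) →
      ∀ j ≤ k, pad k t j = w j := fun t w hw j hj => (hw j hj).symm
  have hcover : A ∩ {w | w 0 = 1} = ⋃ t : T, cyl k (pad k t.1) := by
    ext w
    constructor
    · rintro ⟨hwA, hw0⟩
      refine Set.mem_iUnion.mpr ⟨⟨fun j => w j, ?_, hw0⟩, pad_mem_cyl w⟩
      exact hA w _ (fun j hj => (pad_mem_cyl w j hj)) hwA
    · intro hw
      obtain ⟨t, hwt⟩ := Set.mem_iUnion.mp hw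
      refine ⟨hA (pad k t.1) w (hagree t.1 w hwt) t.2.1, ?_⟩
      show w 0 = 1
      rw [hwt 0 (Nat.zero_le k), pad_le _ (Nat.zero_le k)]
      exact t.2.2
  have hdisj : Pairwise (Function.onFun Disjoint fun t : T => cyl k (pad k t.1)) := by
    intro t t' htt'
    rw [Function.onFun, Set.disjoint_left]
    intro w hw hw'
    refine htt' (Subtype.ext (funext fun j => ?_))
    have h1 := hw j.1 (Nat.lt_succ_iff.mp j.2)
    have h2 := hw' j.1 (Nat.lt_succ_iff.mp j.2)
    rw [pad_le _ (Nat.lt_succ_iff.mp j.2)] at h1 h2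
    simp only [Fin.eta] at h1 h2
    rw [← h1, ← h2]
  have key : ∀ B : Set (ℕ → G), MeasurableSet B →
      P ((A ∩ {w | w 0 = 1}) ∩ shiftW k ⁻¹' B) = (∑' t : T, P (cyl k (pad k t.1))) * P B := by
    intro B hB
    rw [hcover, Set.iUnion_inter]
    rw [measure_iUnion (fun t t' htt' => (hdisj htt').mono Set.inter_subset_left
        Set.inter_subset_left)
      (fun t => (measurableSet_cyl k (pad k t.1)).inter (measurable_shiftW k hB))]
    rw [← ENNReal.tsum_mul_right]
    exact tsum_congr fun t => indep_cyl hP k (pad k t.1) hB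
  have hPA : P (A ∩ {w | w 0 = 1}) = ∑' t : T, P (cyl k (pad k t.1)) := by
    have := key Set.univ MeasurableSet.univ
    simpa [measure_univ] using this
  calc P (A ∩ shiftW k ⁻¹' D)
      = P ((A ∩ shiftW k ⁻¹' D) ∩ {w | w 0 = 1}) := (P_inter_one hP _).symm
    _ = P ((A ∩ {w | w 0 = 1}) ∩ shiftW k ⁻¹' D) := by rw [Set.inter_right_comm]
    _ = (∑' t : T, P (cyl k (pad k t.1))) * P D := key D hD
    _ = P (A ∩ {w | w 0 = 1}) * P D := by rw [hPA]
    _ = P A * P D := by rw [P_inter_one hP]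

lemma map_shiftW {μ : PMF G} {P : Measure (ℕ → G)} (hP : IsRWMeasure μ P) (k : ℕ) :
    Measure.map (shiftW k) P = P := by
  haveI := hP.1
  ext s hs
  rw [Measure.map_apply (measurable_shiftW k) hs]
  have h := indep_dep hP k Set.univ (fun _ _ _ _ => trivial) hs
  simpa [measure_univ] using h

/-- Transfer of a.e. statements along the shift. -/
lemma ae_shiftW {μ : PMF G} {P : Measure (ℕ → G)} (hP : IsRWMeasure μ P) (k : ℕ)
    {p : (ℕ → G) → Prop} (h : ∀ᵐ w ∂P, p w) : ∀ᵐ w ∂P, p (shiftW k w) := by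
  rw [ae_iff] at h ⊢
  obtain ⟨M, hMsub, hMmeas, hM0⟩ := exists_measurable_superset_of_null h
  have hnull : P (shiftW k ⁻¹' M) = 0 := by
    rw [← Measure.map_apply (measurable_shiftW k) hMmeas, map_shiftW hP]
    exact hM0
  exact measure_mono_null (fun w hw => (hMsub hw : shiftW k w ∈ M)) hnull

/-! ### Boundary lemmas -/

lemma isClosed_closedArc {J : Set S1} (h : IsClosedArc J) : IsClosed J := by
  obtain ⟨α, β, -, -, rfl⟩ := h
  have hc : Continuous toS1 := continuous_quotient_mk'
  exact (isCompact_Icc.image hc).isClosed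

variable [MulAction G S1]

lemma wsd_unique {ν : Measure S1} {w : ℕ → G} {z z' : S1}
    (h : WeakStarToDirac ν w z) (h' : WeakStarToDirac ν w z') : z = z' := by
  let f : C(S1, ℝ) := ⟨fun x => dist x z, continuous_id.dist continuous_const⟩
  have huniq : f z = f z' := tendsto_nhds_unique (h f) (h' f)
  have h0 : dist z' z = 0 := by
    have : dist z z = dist z' z := huniq
    rw [← this, dist_self]
  exact (dist_eq_zero.mp h0).symm

lemma bnd_shift {μ : PMF G} {P : Measure (ℕ → G)} (hP : IsRWMeasure μ P)
    (hhomeo : ActsByHomeos G) {ν : Measure S1} {bnd : (ℕ → G) → S1}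
    (hconv : ∀ᵐ w ∂P, WeakStarToDirac ν w (bnd w)) (k : ℕ) :
    ∀ᵐ w ∂P, bnd (shiftW k w) = (w k)⁻¹ • bnd w := by
  have hshift : ∀ᵐ w ∂P, WeakStarToDirac ν (shiftW k w) (bnd (shiftW k w)) :=
    ae_shiftW hP k hconv
  filter_upwards [hconv, hshift] with w H1 H2
  have H3 : WeakStarToDirac ν (shiftW k w) ((w k)⁻¹ • bnd w) := by
    intro f
    let f' : C(S1, ℝ) := f.comp ⟨fun x => (w k)⁻¹ • x, hhomeo ((w k)⁻¹)⟩
    have h4 := (H1 f').comp (Filter.tendsto_add_atTop_nat k)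
    have heq : (fun n => ∫ x, f' (w (n + k) • x) ∂ν)
        = fun n => ∫ x, f (shiftW k w n • x) ∂ν := by
      funext n
      refine MeasureTheory.integral_congr_ae (Filter.Eventually.of_forall fun x => ?_)
      show f ((w k)⁻¹ • (w (n + k) • x)) = f (((w k)⁻¹ * w (k + n)) • x)
      rw [mul_smul, Nat.add_comm n k]
    have h5 : Filter.Tendsto (fun n => ∫ x, f' (w (n + k) • x) ∂ν) Filter.atTop
        (nhds (f' (bnd w))) := h4
    rw [heq] at h5
    exact h5
  exact wsd_unique H2 H3

lemma lam_step {μ : PMF G} {P : Measure (ℕ → G)} (hP : IsRWMeasure μ P)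
    (hhomeo : ActsByHomeos G) {ν : Measure S1} {bnd : (ℕ → G) → S1}
    (hbnd : Measurable bnd)
    (hconv : ∀ᵐ w ∂P, WeakStarToDirac ν w (bnd w))
    {S : Set S1} (hS : MeasurableSet S) :
    P (bnd ⁻¹' S) = ∑' g : G, μ g * P (bnd ⁻¹' ((fun z : S1 => g • z) ⁻¹' S)) := by
  haveI := hP.1
  have hpart : bnd ⁻¹' S = ⋃ g : G, ({w : ℕ → G | w 1 = g} ∩ bnd ⁻¹' S) := by
    ext w; simp
  have hdisj : Pairwise (Function.onFun Disjoint
      fun g : G => (({w : ℕ → G | w 1 = g} : Set (ℕ → G)) ∩ bnd ⁻¹' S)) := by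
    intro g g' hgg'
    rw [Function.onFun, Set.disjoint_left]
    rintro w ⟨h1, -⟩ ⟨h2, -⟩
    exact hgg' (h1.symm.trans h2)
  have hcoord : ∀ (i : ℕ) (g : G), MeasurableSet {w : ℕ → G | w i = g} := by
    intro i g
    have h : {w : ℕ → G | w i = g} = (fun w : ℕ → G => w i) ⁻¹' {g} := rfl
    rw [h]
    exact measurable_pi_apply i (measG {g})
  have hmeasg : ∀ g : G, MeasurableSet (({w : ℕ → G | w 1 = g} : Set (ℕ → G)) ∩ bnd ⁻¹' S) :=
    fun g => (hcoord 1 g).inter (hbnd hS)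
  rw [hpart, measure_iUnion hdisj hmeasg]
  refine tsum_congr fun g => ?_
  have hae := bnd_shift hP hhomeo hconv 1
  have hcong : P (({w : ℕ → G | w 1 = g} : Set (ℕ → G)) ∩ bnd ⁻¹' S)
      = P (({w : ℕ → G | w 1 = g} : Set (ℕ → G))
        ∩ shiftW 1 ⁻¹' (bnd ⁻¹' ((fun z : S1 => g • z) ⁻¹' S))) := by
    refine measure_congr (Filter.eventuallyEq_set.mpr ?_)
    filter_upwards [hae] with w hw
    constructor
    · rintro ⟨h1, h2⟩
      refine ⟨h1, ?_⟩
      show g • bnd (shiftW 1 w) ∈ S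
      rw [hw, h1, smul_inv_smul]
      exact h2
    · rintro ⟨h1, h2⟩
      refine ⟨h1, ?_⟩
      have h3 : g • bnd (shiftW 1 w) ∈ S := h2
      rw [hw, h1, smul_inv_smul] at h3
      exact h3
  rw [hcong]
  rw [indep_dep hP 1 {w : ℕ → G | w 1 = g}
    (fun w w' hww' hw => by rw [Set.mem_setOf_eq, ← hww' 1 le_rfl]; exact hw)
    (hbnd ((hhomeo g).measurable hS))]
  congr 1
  rw [← P_inter_one hP {w : ℕ → G | w 1 = g}]
  have hcyl : (({w : ℕ → G | w 1 = g} : Set (ℕ → G)) ∩ {w | w 0 = 1})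
      = cyl 1 (fun j => if j = 0 then 1 else g) := by
    ext w
    constructor
    · rintro ⟨h1, h0⟩ j hj
      interval_cases j
      · simpa using h0
      · simpa using h1
    · intro h
      constructor
      · have := h 1 le_rfl
        simpa using this
      · have := h 0 (Nat.zero_le 1)
        simpa using this
  rw [hcyl, P_cyl hP (by simp) 1]
  simp

lemma lam_pos {μ : PMF G} {P : Measure (ℕ → G)} (hP : IsRWMeasure μ P)
    (hhomeo : ActsByHomeos G) {ν : Measure S1} {bnd : (ℕ → G) → S1}
    (hbnd : Measurable bnd)
    (hconv : ∀ᵐ w ∂P, WeakStarToDirac ν w (bnd w))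
    (hmin : MinimalAct G) (hnd : Nondeg μ)
    {J : Set S1} (hJc : IsClosed J) (hJne : J ≠ Set.univ) :
    P (bnd ⁻¹' Jᶜ) ≠ 0 := by
  haveI := hP.1
  intro h0
  have hJm : MeasurableSet J := hJc.measurableSet
  have step : ∀ h : G, P (bnd ⁻¹' ((fun z : S1 => h • z) ⁻¹' Jᶜ)) = 0 →
      ∀ g : G, μ g ≠ 0 → P (bnd ⁻¹' ((fun z : S1 => (h * g) • z) ⁻¹' Jᶜ)) = 0 := by
    intro h hh g hg
    have hstep := lam_step hP hhomeo hbnd hconv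
      (S := (fun z : S1 => h • z) ⁻¹' Jᶜ) ((hhomeo h).measurable hJm.compl)
    rw [hh] at hstep
    have hterm := ENNReal.tsum_eq_zero.mp hstep.symm g
    rcases mul_eq_zero.mp hterm with h1 | h2
    · exact absurd h1 hg
    · have hcomp : ((fun z : S1 => g • z) ⁻¹' ((fun z : S1 => h • z) ⁻¹' Jᶜ))
          = (fun z : S1 => (h * g) • z) ⁻¹' Jᶜ := by
        ext z
        simp [mul_smul]
      rwa [hcomp] at h2
  have base : P (bnd ⁻¹' ((fun z : S1 => (1:G) • z) ⁻¹' Jᶜ)) = 0 := by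
    have h1 : (fun z : S1 => (1:G) • z) ⁻¹' Jᶜ = Jᶜ := by
      ext z
      simp
    rw [h1]
    exact h0
  have main : ∀ y : G, ∀ h : G, P (bnd ⁻¹' ((fun z : S1 => h • z) ⁻¹' Jᶜ)) = 0 →
      P (bnd ⁻¹' ((fun z : S1 => (h * y) • z) ⁻¹' Jᶜ)) = 0 := by
    intro y
    have hy : y ∈ Subsemigroup.closure (μ.support : Set G) := by
      rw [hnd]
      trivial
    refine Subsemigroup.closure_induction
      (fun x hx => fun h hh => step h hh x ((PMF.mem_support_iff μ x).mp hx))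
      (fun x y' hx hy' ihx ihy' => fun h hh => ?_) hy
    have h2 := ihy' (h * x) (ihx h hh)
    rwa [mul_assoc] at h2
  have all0 : ∀ h : G, P (bnd ⁻¹' ((fun z : S1 => h • z) ⁻¹' Jᶜ)) = 0 := by
    intro h
    have := main h 1 base
    simpa [one_mul] using this
  have hU : P (⋃ h : G, bnd ⁻¹' ((fun z : S1 => h • z) ⁻¹' Jᶜ)) = 0 :=
    measure_iUnion_null all0
  by_cases hempty : (⋂ h : G, (fun z : S1 => h • z) ⁻¹' J) = ∅
  · have huniv : (⋃ h : G, bnd ⁻¹' ((fun z : S1 => h • z) ⁻¹' Jᶜ)) = Set.univ := by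
      ext w
      simp only [Set.mem_iUnion, Set.mem_preimage, Set.mem_compl_iff, Set.mem_univ, iff_true]
      by_contra hc
      push_neg at hc
      have hmem : bnd w ∈ ⋂ h : G, (fun z : S1 => h • z) ⁻¹' J :=
        Set.mem_iInter.mpr fun h => hc h
      rw [hempty] at hmem
      exact hmem
    rw [huniv, measure_univ] at hU
    exact one_ne_zero hU
  · obtain ⟨x, hx⟩ := Set.nonempty_iff_ne_empty.mpr hempty
    have horb : MulAction.orbit G x ⊆ J := by
      rintro - ⟨h, rfl⟩
      exact Set.mem_iInter.mp hx h
    have hcl : closure (MulAction.orbit G x) ⊆ J := hJc.closure_subset_iff.mpr horb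
    rw [(hmin x).closure_eq] at hcl
    exact hJne (Set.eq_univ_of_univ_subset hcl)

/-! ### Counting and integration helpers -/

lemma measurableSet_coordEq (i : ℕ) (g : G) : MeasurableSet {w : ℕ → G | w i = g} := by
  have h : {w : ℕ → G | w i = g} = (fun w : ℕ → G => w i) ⁻¹' {g} := rfl
  rw [h]
  exact measurable_pi_apply i (measG {g})

lemma natCard_filter (n : ℕ) (Q : ℕ → Prop) [DecidablePred Q] :
    Nat.card {k : ℕ // 1 ≤ k ∧ k ≤ n ∧ Q k} = ((Finset.Icc 1 n).filter Q).card := by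
  have e : {k : ℕ // 1 ≤ k ∧ k ≤ n ∧ Q k} ≃ {k : ℕ // k ∈ (Finset.Icc 1 n).filter Q} :=
    Equiv.subtypeEquivRight (fun k => by
      simp only [Finset.mem_filter, Finset.mem_Icc]
      tauto)
  rw [Nat.card_congr e, Nat.card_eq_fintype_card, Fintype.card_coe]

lemma count_cast (n : ℕ) (Q : ℕ → Prop) [DecidablePred Q] :
    ((Nat.card {k : ℕ // 1 ≤ k ∧ k ≤ n ∧ Q k} : ℕ) : ℝ)
      = ∑ k ∈ Finset.Icc 1 n, if Q k then (1:ℝ) else 0 := by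
  rw [natCard_filter n Q, Finset.card_filter]
  push_cast
  exact Finset.sum_congr rfl fun k _ => by split <;> simp

lemma integral_count {P : Measure (ℕ → G)} [IsProbabilityMeasure P] (n : ℕ)
    (A : ℕ → Set (ℕ → G)) (hA : ∀ k, MeasurableSet (A k))
    (F : (ℕ → G) → ℕ)
    (hF : ∀ w, (F w : ℝ) = ∑ k ∈ Finset.Icc 1 n, (A k).indicator (fun _ => (1:ℝ)) w) :
    ∫ w, (F w : ℝ) ∂P = ∑ k ∈ Finset.Icc 1 n, (P (A k)).toReal := by
  have hint : ∀ k ∈ Finset.Icc 1 n,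
      Integrable (fun w => (A k).indicator (fun _ => (1:ℝ)) w) P := by
    intro k _
    exact (integrable_const (1:ℝ)).indicator (hA k)
  calc ∫ w, (F w : ℝ) ∂P
      = ∫ w, ∑ k ∈ Finset.Icc 1 n, (A k).indicator (fun _ => (1:ℝ)) w ∂P :=
        integral_congr_ae (Filter.Eventually.of_forall fun w => hF w)
    _ = ∑ k ∈ Finset.Icc 1 n, ∫ w, (A k).indicator (fun _ => (1:ℝ)) w ∂P :=
        integral_finset_sum _ hint
    _ = ∑ k ∈ Finset.Icc 1 n, (P (A k)).toReal := by
        refine Finset.sum_congr rfl fun k _ => ?_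
        rw [integral_indicator_const (1:ℝ) (hA k), smul_eq_mul, mul_one]
        rfl

lemma count_cast_indicator (n : ℕ) (A : ℕ → Set (ℕ → G)) (w : ℕ → G) :
    ((Nat.card {k : ℕ // 1 ≤ k ∧ k ≤ n ∧ w ∈ A k} : ℕ) : ℝ)
      = ∑ k ∈ Finset.Icc 1 n, (A k).indicator (fun _ => (1:ℝ)) w := by
  classical
  rw [count_cast n (fun k => w ∈ A k)]
  refine Finset.sum_congr rfl fun k _ => ?_
  by_cases h : w ∈ A k
  · rw [if_pos h, Set.indicator_of_mem h]
  · rw [if_neg h, Set.indicator_of_notMem h]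

end RW15
/-- (Linearly many useful times.) Under the listed hypotheses, the random
variable `Wₙ` counting the times `1 ≤ k ≤ n` at which `w_k(J)` dominates all earlier translates,
`w_k⁻¹(ξ(w)) ∉ J`, and the increment `g_{k+1} ∈ {a, e}`, has expectation at least `c' n` for
some `0 < c' < 1` and all sufficiently large `n`. -/
theorem linearly_many_useful_times
    {G : Type} [Group G] [Countable G] [MulAction G S1]
    [MeasurableSpace G] [MeasurableSingletonClass G]
    (hhomeo : ActsByHomeos G) (hfaith : FaithfulAct G) (horient : ∀ g : G, OrientPres g)
    (hmin : MinimalAct G) (hprox : ProximalAct G) (hnonfree : TopNonfree G)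
    (μ : PMF G) (hnd : Nondeg μ) (hlazy : 0 < μ 1)
    (ν : Measure S1) (hν : IsUniqueStationaryS1 μ ν)
    (νbar : Measure S1) (hνbar : IsUniqueStationaryS1 (μ.map fun g => g⁻¹) νbar)
    (I : Set S1) (hI : IsClosedArc I) (hνI : ν I < 1 / 2)
    (a : G) (haSupp : a ∈ μ.support) (ha1 : a ≠ 1) (haI : homSupp a ⊆ I)
    (J : Set S1) (hJarc : IsClosedArc J) (hJsupp : homSupp a ⊆ J)
    (hJmin : ∀ J' : Set S1, IsClosedArc J' → homSupp a ⊆ J' → J ⊆ J')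
    (c : ℝ) (hc0 : 0 < c) (hc1 : c < 1) (hνbarJ : νbar J < ENNReal.ofReal (c / 8))
    (P : Measure (ℕ → G)) (hP : IsRWMeasure μ P)
    (bnd : (ℕ → G) → S1) (hbnd : Measurable bnd)
    (hconv : ∀ᵐ w ∂P, WeakStarToDirac ν w (bnd w))
    (hZ : ∃ N₀ : ℕ, ∀ n ≥ N₀, c * n ≤ ∫ w, (Zvar J n 1 w : ℝ) ∂P) :
    ∃ c' : ℝ, 0 < c' ∧ c' < 1 ∧ ∃ N : ℕ, ∀ n ≥ N,
      c' * n ≤ ∫ w, (Wvar J a bnd n w : ℝ) ∂P := by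
  classical
  haveI := hP.1
  obtain ⟨N₀, hZbound⟩ := hZ
  -- Basic facts about J
  have hJclosed : IsClosed J := RW15.isClosed_closedArc hJarc
  have hJI : J ⊆ I := hJmin I hI haI
  have hJne : J ≠ Set.univ := by
    intro h
    have hIu : I = Set.univ := Set.eq_univ_of_univ_subset (h ▸ hJI)
    haveI := hν.1
    rw [hIu, measure_univ] at hνI
    exact absurd (hνI.trans (ENNReal.half_lt_self one_ne_zero ENNReal.one_ne_top))
      (lt_irrefl _)
  have hJm : MeasurableSet J := hJclosed.measurableSet
  -- The relevant events
  set Bset : ℕ → Set (ℕ → G) := fun k => {w : ℕ → G | ∀ j < k,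
    Dominates ((fun z : S1 => w k • z) '' J) ((fun z : S1 => w j • z) '' J)} with hBdef
  set Sset : ℕ → Set (ℕ → G) := fun k => {w : ℕ → G |
    (∀ j < k, Dominates ((fun z : S1 => w k • z) '' J) ((fun z : S1 => w j • z) '' J)) ∧
    (w k)⁻¹ • bnd w ∉ J ∧ ((w k)⁻¹ * w (k + 1) = a ∨ (w k)⁻¹ * w (k + 1) = 1)} with hSdef
  set Dset : Set (ℕ → G) := {v : ℕ → G | v 1 = 1 ∧ bnd v ∉ J} with hDdef
  -- Measurability
  have hBmeas : ∀ k, MeasurableSet (Bset k) := by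
    intro k
    have h : Bset k = ⋂ j, ⋂ (_ : j < k),
        (fun w : ℕ → G => (w j, w k)) ⁻¹' {p : G × G |
          Dominates ((fun z : S1 => p.2 • z) '' J) ((fun z : S1 => p.1 • z) '' J)} := by
      ext w
      simp only [hBdef, Set.mem_setOf_eq, Set.mem_iInter, Set.mem_preimage]
    rw [h]
    refine MeasurableSet.iInter fun j => MeasurableSet.iInter fun _ => ?_
    exact ((measurable_pi_apply j).prodMk (measurable_pi_apply k))
      ((Set.to_countable _).measurableSet)
  have hXimeas : ∀ k, MeasurableSet {w : ℕ → G | (w k)⁻¹ • bnd w ∉ J} := by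
    intro k
    have h : {w : ℕ → G | (w k)⁻¹ • bnd w ∉ J}
        = ⋃ g : G, ({w : ℕ → G | w k = g}
          ∩ bnd ⁻¹' ((fun z : S1 => g⁻¹ • z) ⁻¹' Jᶜ)) := by
      ext w
      simp only [Set.mem_setOf_eq, Set.mem_iUnion, Set.mem_inter_iff, Set.mem_preimage,
        Set.mem_compl_iff]
      constructor
      · intro hw
        exact ⟨w k, rfl, hw⟩
      · rintro ⟨g, rfl, hw⟩
        exact hw
    rw [h]
    exact MeasurableSet.iUnion fun g => (RW15.measurableSet_coordEq k g).inter
      (hbnd ((hhomeo g⁻¹).measurable hJm.compl))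
  have hincmeas : ∀ k, MeasurableSet
      {w : ℕ → G | (w k)⁻¹ * w (k + 1) = a ∨ (w k)⁻¹ * w (k + 1) = 1} := by
    intro k
    have h : {w : ℕ → G | (w k)⁻¹ * w (k + 1) = a ∨ (w k)⁻¹ * w (k + 1) = 1}
        = RW15.shiftW k ⁻¹' ({v : ℕ → G | v 1 = a} ∪ {v : ℕ → G | v 1 = 1}) := rfl
    rw [h]
    exact RW15.measurable_shiftW k
      ((RW15.measurableSet_coordEq 1 a).union (RW15.measurableSet_coordEq 1 1))
  have hSmeas : ∀ k, MeasurableSet (Sset k) := by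
    intro k
    have h : Sset k = Bset k ∩ ({w : ℕ → G | (w k)⁻¹ • bnd w ∉ J}
        ∩ {w : ℕ → G | (w k)⁻¹ * w (k + 1) = a ∨ (w k)⁻¹ * w (k + 1) = 1}) := rfl
    rw [h]
    exact (hBmeas k).inter ((hXimeas k).inter (hincmeas k))
  have hDmeas : MeasurableSet Dset := by
    have h : Dset = {w : ℕ → G | w 1 = 1} ∩ bnd ⁻¹' Jᶜ := rfl
    rw [h]
    exact (RW15.measurableSet_coordEq 1 1).inter (hbnd hJm.compl)
  -- Positivity of the boundary measure of Jᶜ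
  have hlampos : P (bnd ⁻¹' Jᶜ) ≠ 0 :=
    RW15.lam_pos hP hhomeo hbnd hconv hmin hnd hJclosed hJne
  -- Lower bound for P Dset
  have hDlower : μ 1 * P (bnd ⁻¹' Jᶜ) ≤ P Dset := by
    have hae := RW15.bnd_shift hP hhomeo hconv 1
    obtain ⟨M, hMsub, hMmeas, hM0⟩ := exists_measurable_superset_of_null (ae_iff.mp hae)
    have hsub : (RW15.cyl 1 (fun _ => (1:G)) ∩ RW15.shiftW 1 ⁻¹' (bnd ⁻¹' Jᶜ)) \ M
        ⊆ Dset := by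
      rintro w ⟨⟨hcylw, hshiftw⟩, hM⟩
      have hid : bnd (RW15.shiftW 1 w) = (w 1)⁻¹ • bnd w := by
        by_contra hc
        exact hM (hMsub hc)
      have h1 : w 1 = 1 := hcylw 1 le_rfl
      refine ⟨h1, ?_⟩
      have h2 : bnd (RW15.shiftW 1 w) ∈ Jᶜ := hshiftw
      rw [hid, h1] at h2
      simpa using h2
    calc μ 1 * P (bnd ⁻¹' Jᶜ)
        = P (RW15.cyl 1 (fun _ => (1:G))) * P (bnd ⁻¹' Jᶜ) := by
          rw [RW15.P_cyl hP rfl 1]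
          simp
      _ = P (RW15.cyl 1 (fun _ => (1:G)) ∩ RW15.shiftW 1 ⁻¹' (bnd ⁻¹' Jᶜ)) :=
          (RW15.indep_cyl hP 1 _ (hbnd hJm.compl)).symm
      _ ≤ P ((RW15.cyl 1 (fun _ => (1:G)) ∩ RW15.shiftW 1 ⁻¹' (bnd ⁻¹' Jᶜ)) \ M) + P M :=
          le_trans (measure_mono (Set.subset_diff_union _ M)) (measure_union_le _ _)
      _ = P ((RW15.cyl 1 (fun _ => (1:G)) ∩ RW15.shiftW 1 ⁻¹' (bnd ⁻¹' Jᶜ)) \ M) := by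
          rw [hM0, add_zero]
      _ ≤ P Dset := measure_mono hsub
  have hDpos : P Dset ≠ 0 := by
    intro h
    rw [h] at hDlower
    rcases mul_eq_zero.mp (le_antisymm hDlower zero_le) with h1 | h2
    · exact hlazy.ne' h1
    · exact hlampos h2
  set κ : ℝ := (P Dset).toReal with hκdef
  have hκpos : 0 < κ := ENNReal.toReal_pos hDpos (measure_ne_top P _)
  have hκle : κ ≤ 1 := by
    have h := ENNReal.toReal_mono ENNReal.one_ne_top (prob_le_one (μ := P) (s := Dset))
    simpa using h
  -- The key inequality for each time k
  have hkey : ∀ k, P (Bset k) * P Dset ≤ P (Sset k) := by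
    intro k
    have hae := RW15.bnd_shift hP hhomeo hconv k
    obtain ⟨M, hMsub, hMmeas, hM0⟩ := exists_measurable_superset_of_null (ae_iff.mp hae)
    have hdep : ∀ w w' : ℕ → G, (∀ j ≤ k, w j = w' j) → w ∈ Bset k → w' ∈ Bset k := by
      intro w w' hj hw j hjk
      have h1 : w' j = w j := (hj j (le_of_lt hjk)).symm
      have h2 : w' k = w k := (hj k le_rfl).symm
      rw [h1, h2]
      exact hw j hjk
    have hindep := RW15.indep_dep hP k (Bset k) hdep hDmeas
    have hsub : (Bset k ∩ RW15.shiftW k ⁻¹' Dset) \ M ⊆ Sset k := by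
      rintro w ⟨⟨hB, hD⟩, hM⟩
      have hid : bnd (RW15.shiftW k w) = (w k)⁻¹ • bnd w := by
        by_contra hc
        exact hM (hMsub hc)
      obtain ⟨hv1, hvb⟩ := hD
      refine ⟨hB, ?_, Or.inr hv1⟩
      rw [← hid]
      exact hvb
    calc P (Bset k) * P Dset = P (Bset k ∩ RW15.shiftW k ⁻¹' Dset) := hindep.symm
      _ ≤ P ((Bset k ∩ RW15.shiftW k ⁻¹' Dset) \ M) + P M :=
          le_trans (measure_mono (Set.subset_diff_union _ M)) (measure_union_le _ _)
      _ = P ((Bset k ∩ RW15.shiftW k ⁻¹' Dset) \ M) := by rw [hM0, add_zero]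
      _ ≤ P (Sset k) := measure_mono hsub
  -- Integral identities
  have hWint : ∀ n : ℕ, ∫ w, (Wvar J a bnd n w : ℝ) ∂P
      = ∑ k ∈ Finset.Icc 1 n, (P (Sset k)).toReal := by
    intro n
    refine RW15.integral_count n Sset hSmeas _ fun w => ?_
    simp only [Wvar]
    exact RW15.count_cast_indicator n Sset w
  have hZint : ∀ n : ℕ, ∫ w, (Zvar J n 1 w : ℝ) ∂P
      = ∑ k ∈ Finset.Icc 1 n, (P (Bset k)).toReal := by
    intro n
    refine RW15.integral_count n Bset hBmeas _ fun w => ?_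
    simp only [Zvar]
    have hcongr : Nat.card {k : ℕ // 1 ≤ k ∧ k ≤ ⌈(n : ℝ) / ((1 : ℕ) : ℝ)⌉₊ ∧
        ∀ j < k, Dominates ((fun z : S1 => w (k * 1) • z) '' J)
          ((fun z : S1 => w (j * 1) • z) '' J)}
        = Nat.card {k : ℕ // 1 ≤ k ∧ k ≤ n ∧ w ∈ Bset k} := by
      refine Nat.card_congr (Equiv.subtypeEquivRight fun k => ?_)
      have hceil : ⌈(n : ℝ) / ((1 : ℕ) : ℝ)⌉₊ = n := by
        norm_num
      rw [hceil]
      simp only [mul_one, hBdef, Set.mem_setOf_eq]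
    rw [hcongr]
    exact RW15.count_cast_indicator n Bset w
  -- Conclusion
  refine ⟨c * κ, mul_pos hc0 hκpos, ?_, N₀, fun n hn => ?_⟩
  · calc c * κ ≤ c * 1 := mul_le_mul_of_nonneg_left hκle hc0.le
      _ < 1 := by rw [mul_one]; exact hc1
  · have hZn := hZbound n hn
    rw [hZint n] at hZn
    rw [hWint n]
    calc c * κ * (n : ℝ) = κ * (c * n) := by ring
      _ ≤ κ * ∑ k ∈ Finset.Icc 1 n, (P (Bset k)).toReal :=
          mul_le_mul_of_nonneg_left hZn hκpos.le
      _ = ∑ k ∈ Finset.Icc 1 n, (P (Bset k)).toReal * κ := by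
          rw [Finset.mul_sum]
          exact Finset.sum_congr rfl fun k _ => mul_comm _ _
      _ ≤ ∑ k ∈ Finset.Icc 1 n, (P (Sset k)).toReal := by
          refine Finset.sum_le_sum fun k _ => ?_
          have h := hkey k
          have h2 : ((P (Bset k)) * P Dset).toReal ≤ (P (Sset k)).toReal :=
            ENNReal.toReal_mono (measure_ne_top P _) h
          rwa [ENNReal.toReal_mul] at h2


end
end
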